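/- arXiv:1812.03328 — 3 statements merged into one kernel-verified Lean document; each statement's English description precedes it below -/
import Mathlib

section
/- For every strict partition λ = (λ_1 > ... > λ_r > 0) with r ≤ n, the universal factorial Schur functions P^L_λ(x_1,...,x_n|b) and Q^L_λ(x_1,...,x_n|b) are well defined elements of L[[b]][[x_1,...,x_n]]: although each summand involves the denominators x_i +_F \bar{x}_j, the full symmetrized sums (1/(n−r)!) Σ_{w∈S_n} w[ [x|b]^λ ∏_{i=1}^r ∏_{j=i+1}^n (x_i +_F x_j)/(x_i +_F \bar{x}_j) ] and (1/(n−r)!) Σ_{w∈S_n} w[ [[x|b]]^λ ∏_{i=1}^r ∏_{j=i+1}^n (x_i +_F x_j)/(x_i +_F \bar{x}_j) ] are formal power series in x_1,...,x_n with coefficients in L[[b]]. -/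
/- ## Formal group laws, coefficientwise substitution, universal Schur P,Q-functions -/

noncomputable section

open Finset MvPowerSeries

/-- Substitution of two power series (with zero constant term) into a two-variable
series `∑ a i j * u^i * v^j`, computed coefficientwise. -/
def fadd {L : Type} [CommRing L] {σ : Type} (a : ℕ → ℕ → L)
    (X Y : MvPowerSeries σ L) : MvPowerSeries σ L :=
  fun d => ∑ p ∈ Finset.range ((d.sum fun _ n => n) + 1) ×ˢ
      Finset.range ((d.sum fun _ n => n) + 1),
    a p.1 p.2 * MvPowerSeries.coeff (R := L) d (X ^ p.1 * Y ^ p.2)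

/-- Substitution of a power series (with zero constant term) into a one-variable
series `∑ c k * u^k`, computed coefficientwise. -/
def fsub1 {L : Type} [CommRing L] {σ : Type} (c : ℕ → L)
    (X : MvPowerSeries σ L) : MvPowerSeries σ L :=
  fun d => ∑ k ∈ Finset.range ((d.sum fun _ n => n) + 1),
    c k * MvPowerSeries.coeff (R := L) d (X ^ k)

/-- Substitution `x_i ↦ v i` in a multivariate power series, computed coefficientwise;
meaningful when every `v i` has zero constant term. -/
def msubst {L : Type} [CommRing L] {σ τ : Type} (v : σ → MvPowerSeries τ L)
    (f : MvPowerSeries σ L) : MvPowerSeries τ L :=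
  fun d => ∑ᶠ e : σ →₀ ℕ,
    MvPowerSeries.coeff (R := L) e f * MvPowerSeries.coeff (R := L) d (e.prod fun i k => v i ^ k)

/-- A one-dimensional commutative formal group law over `L` together with its
formal inverse series; the axioms are stated for substitution of arbitrary
power series with zero constant term. -/
structure FGL (L : Type) [CommRing L] where
  /-- the coefficients `a i j` of `F(u,v) = ∑ a i j · u^i v^j` -/
  a : ℕ → ℕ → L
  /-- the coefficients of the formal inverse `χ(u) = ∑ ch k · u^k` -/
  ch : ℕ → L
  ch_zero : ch 0 = 0
  add_zero' : ∀ {σ : Type} (X : MvPowerSeries σ L),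
    MvPowerSeries.constantCoeff (σ := σ) (R := L) X = 0 → fadd a X 0 = X
  comm' : ∀ {σ : Type} (X Y : MvPowerSeries σ L),
    MvPowerSeries.constantCoeff (σ := σ) (R := L) X = 0 → MvPowerSeries.constantCoeff (σ := σ) (R := L) Y = 0 →
      fadd a X Y = fadd a Y X
  assoc' : ∀ {σ : Type} (X Y Z : MvPowerSeries σ L),
    MvPowerSeries.constantCoeff (σ := σ) (R := L) X = 0 → MvPowerSeries.constantCoeff (σ := σ) (R := L) Y = 0 →
      MvPowerSeries.constantCoeff (σ := σ) (R := L) Z = 0 →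
      fadd a (fadd a X Y) Z = fadd a X (fadd a Y Z)
  add_inv' : ∀ {σ : Type} (X : MvPowerSeries σ L),
    MvPowerSeries.constantCoeff (σ := σ) (R := L) X = 0 → fadd a X (fsub1 ch X) = 0

/-- The formal inverse `X ↦ \bar X` associated to a formal group law. -/
def FGL.neg {L : Type} [CommRing L] (G : FGL L) {σ : Type}
    (X : MvPowerSeries σ L) : MvPowerSeries σ L := fsub1 G.ch X

variable {L : Type} [CommRing L] {σ : Type}

/-- `[t|b]^k = ∏_{i=1}^k (t +_F b_i)` (here `bs i` stands for `b_{i+1}`). -/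
def facPow (G : FGL L) (t : MvPowerSeries σ L) (bs : ℕ → MvPowerSeries σ L) (k : ℕ) :
    MvPowerSeries σ L :=
  ∏ i ∈ Finset.range k, fadd G.a t (bs i)

/-- `[[t|b]]^k`: `[[t|b]]^0 = 1` and `[[t|b]]^k = (t +_F t)·[t|b]^{k-1}` for `k ≥ 1`. -/
def facPowQ (G : FGL L) (t : MvPowerSeries σ L) (bs : ℕ → MvPowerSeries σ L) :
    ℕ → MvPowerSeries σ L
  | 0 => 1
  | (k + 1) => fadd G.a t t * facPow G t bs k

instance mvPowerSeries_isDomain [IsDomain L] : IsDomain (MvPowerSeries σ L) :=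
  NoZeroDivisors.to_isDomain _

/-- `lam` is a strict partition (written with trailing zeros): entries strictly
decrease until they reach `0`. -/
def IsSP {n : ℕ} (lam : Fin n → ℕ) : Prop :=
  ∀ i j : Fin n, i < j → (lam j < lam i ∨ (lam i = 0 ∧ lam j = 0))

/-- The length (number of nonzero parts) of a partition written with trailing zeros. -/
def spLen {n : ℕ} (lam : Fin n → ℕ) : ℕ :=
  (Finset.univ.filter fun i => lam i ≠ 0).card

variable [IsDomain L] [CharZero L]

/-- The universal factorial Schur P-function
`P^L_λ(x_1,…,x_n|b) = (1/(n-r)!) ∑_{w∈S_n} w[ [x|b]^λ ∏_{i=1}^r ∏_{j=i+1}^n (x_i +_F x_j)/(x_i +_F \bar x_j) ]`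
(for a strict partition `λ` of length `r ≤ n`), as an element of the fraction field
of the power series ring. -/
def PLgen (G : FGL L) (n r : ℕ) (lam : Fin n → ℕ) (x : Fin n → MvPowerSeries σ L)
    (bs : ℕ → MvPowerSeries σ L) : FractionRing (MvPowerSeries σ L) :=
  (((n - r).factorial : FractionRing (MvPowerSeries σ L)))⁻¹ *
    ∑ w : Equiv.Perm (Fin n),
      (algebraMap (MvPowerSeries σ L) (FractionRing (MvPowerSeries σ L))
        ((∏ i : Fin n, facPow G (x (w i)) bs (lam i)) *
          ∏ i ∈ Finset.univ.filter (fun i : Fin n => (i : ℕ) < r), ∏ j ∈ Finset.Ioi i,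
            fadd G.a (x (w i)) (x (w j)))) /
      (algebraMap (MvPowerSeries σ L) (FractionRing (MvPowerSeries σ L))
        (∏ i ∈ Finset.univ.filter (fun i : Fin n => (i : ℕ) < r), ∏ j ∈ Finset.Ioi i,
          fadd G.a (x (w i)) (G.neg (x (w j)))))

/-- The universal factorial Schur Q-function, defined like `PLgen` with
`[[x|b]]^λ` in place of `[x|b]^λ`. -/
def QLgen (G : FGL L) (n r : ℕ) (lam : Fin n → ℕ) (x : Fin n → MvPowerSeries σ L)
    (bs : ℕ → MvPowerSeries σ L) : FractionRing (MvPowerSeries σ L) :=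
  (((n - r).factorial : FractionRing (MvPowerSeries σ L)))⁻¹ *
    ∑ w : Equiv.Perm (Fin n),
      (algebraMap (MvPowerSeries σ L) (FractionRing (MvPowerSeries σ L))
        ((∏ i : Fin n, facPowQ G (x (w i)) bs (lam i)) *
          ∏ i ∈ Finset.univ.filter (fun i : Fin n => (i : ℕ) < r), ∏ j ∈ Finset.Ioi i,
            fadd G.a (x (w i)) (x (w j)))) /
      (algebraMap (MvPowerSeries σ L) (FractionRing (MvPowerSeries σ L))
        (∏ i ∈ Finset.univ.filter (fun i : Fin n => (i : ℕ) < r), ∏ j ∈ Finset.Ioi i,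
          fadd G.a (x (w i)) (G.neg (x (w j)))))

/-- `s^L_λ(x_1,…,x_n|b) = ∑_{w∈S_n} w[ [x|b]^{λ+ρ_{n-1}} / ∏_{i<j} (x_i +_F \bar x_j) ]`. -/
def sLgen (G : FGL L) (n : ℕ) (lam : Fin n → ℕ) (x : Fin n → MvPowerSeries σ L)
    (bs : ℕ → MvPowerSeries σ L) : FractionRing (MvPowerSeries σ L) :=
  ∑ w : Equiv.Perm (Fin n),
    (algebraMap (MvPowerSeries σ L) (FractionRing (MvPowerSeries σ L))
      (∏ i : Fin n, facPow G (x (w i)) bs (lam i + (n - 1 - (i : ℕ))))) /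
    (algebraMap (MvPowerSeries σ L) (FractionRing (MvPowerSeries σ L))
      (∏ i : Fin n, ∏ j ∈ Finset.Ioi i, fadd G.a (x (w i)) (G.neg (x (w j)))))

/- ### Auxiliary infrastructure for the well-definedness proof -/

namespace SchurAux

variable {L : Type} [CommRing L] {σ : Type}

/-- total degree of an exponent -/
def tdeg (d : σ →₀ ℕ) : ℕ := d.sum fun _ n => n

lemma tdeg_add (d e : σ →₀ ℕ) : tdeg (d + e) = tdeg d + tdeg e :=
  Finsupp.sum_add_index' (fun _ => rfl) (fun _ _ _ => rfl)

lemma tdeg_eq_zero {d : σ →₀ ℕ} (h : tdeg d = 0) : d = 0 := by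
  ext s
  by_cases hs : s ∈ d.support
  · have := Finset.sum_eq_zero_iff.mp h s hs
    simpa using this
  · simpa using Finsupp.notMem_support_iff.mp hs

lemma tdeg_single (s : σ) (k : ℕ) : tdeg (Finsupp.single s k) = k := by
  simp [tdeg, Finsupp.sum_single_index]

/-- `f` has order at least `m`. -/
def OrdGe (f : MvPowerSeries σ L) (m : ℕ) : Prop :=
  ∀ d : σ →₀ ℕ, tdeg d < m → coeff (R := L) d f = 0

lemma ordGe_zero (f : MvPowerSeries σ L) : OrdGe f 0 := fun _ h => absurd h (Nat.not_lt_zero _)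

lemma ordGe_one {f : MvPowerSeries σ L} (h : constantCoeff (σ := σ) (R := L) f = 0) : OrdGe f 1 := by
  intro d hd
  have : d = 0 := tdeg_eq_zero (Nat.lt_one_iff.mp hd)
  subst this
  simpa [coeff_zero_eq_constantCoeff] using h

lemma OrdGe.mul {f g : MvPowerSeries σ L} {m k : ℕ} (hf : OrdGe f m) (hg : OrdGe g k) :
    OrdGe (f * g) (m + k) := by
  classical
  intro d hd
  rw [coeff_mul]
  refine Finset.sum_eq_zero fun p hp => ?_
  have hps : p.1 + p.2 = d := Finset.HasAntidiagonal.mem_antidiagonal.mp hp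
  have htd : tdeg p.1 + tdeg p.2 = tdeg d := by rw [← tdeg_add, hps]
  by_cases h1 : tdeg p.1 < m
  · rw [hf _ h1, zero_mul]
  · have : tdeg p.2 < k := by omega
    rw [hg _ this, mul_zero]

lemma OrdGe.pow {f : MvPowerSeries σ L} (hf : OrdGe f 1) (k : ℕ) : OrdGe (f ^ k) k := by
  induction k with
  | zero => simpa using ordGe_zero _
  | succ k ih =>
      rw [pow_succ]
      simpa [Nat.add_comm] using ih.mul hf

lemma OrdGe.mono {f : MvPowerSeries σ L} {m k : ℕ} (hf : OrdGe f m) (h : k ≤ m) : OrdGe f k :=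
  fun d hd => hf d (lt_of_lt_of_le hd h)

lemma ordGe_sum {ι : Type} {s : Finset ι} {f : ι → MvPowerSeries σ L} {m : ℕ}
    (h : ∀ i ∈ s, OrdGe (f i) m) : OrdGe (∑ i ∈ s, f i) m := by
  intro d hd
  rw [map_sum]
  exact Finset.sum_eq_zero fun i hi => h i hi d hd

/-- Stability of the coefficientwise substitution `fadd`. -/
lemma coeff_fadd {a : ℕ → ℕ → L} {X Y : MvPowerSeries σ L}
    (hX : constantCoeff (σ := σ) (R := L) X = 0) (hY : constantCoeff (σ := σ) (R := L) Y = 0)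
    (d : σ →₀ ℕ) {N : ℕ} (hN : tdeg d + 1 ≤ N) :
    coeff (R := L) d (fadd a X Y) =
      ∑ p ∈ Finset.range N ×ˢ Finset.range N, a p.1 p.2 * coeff (R := L) d (X ^ p.1 * Y ^ p.2) := by
  have h0 : coeff (R := L) d (fadd a X Y) = ∑ p ∈ Finset.range (tdeg d + 1) ×ˢ Finset.range (tdeg d + 1),
      a p.1 p.2 * coeff (R := L) d (X ^ p.1 * Y ^ p.2) := rfl
  rw [h0]
  refine Finset.sum_subset ?_ ?_
  · intro p hp
    simp only [Finset.mem_product, Finset.mem_range] at hp ⊢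
    omega
  · intro p hp hnp
    simp only [Finset.mem_product, Finset.mem_range] at hp hnp
    have hord : OrdGe (X ^ p.1 * Y ^ p.2) (p.1 + p.2) :=
      ((ordGe_one hX).pow p.1).mul ((ordGe_one hY).pow p.2)
    rw [hord d (by omega), mul_zero]

lemma coeff_fsub1 {c : ℕ → L} {X : MvPowerSeries σ L}
    (hX : constantCoeff (σ := σ) (R := L) X = 0)
    (d : σ →₀ ℕ) {N : ℕ} (hN : tdeg d + 1 ≤ N) :
    coeff (R := L) d (fsub1 c X) = ∑ k ∈ Finset.range N, c k * coeff (R := L) d (X ^ k) := by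
  have h0 : coeff (R := L) d (fsub1 c X) = ∑ k ∈ Finset.range (tdeg d + 1),
      c k * coeff (R := L) d (X ^ k) := rfl
  rw [h0]
  refine Finset.sum_subset (by intro k hk; simp only [Finset.mem_range] at *; omega) ?_
  intro k hk hnk
  simp only [Finset.mem_range] at hk hnk
  rw [(ordGe_one hX).pow k d (by omega), mul_zero]

lemma constantCoeff_fsub1 {c : ℕ → L} (hc : c 0 = 0) {X : MvPowerSeries σ L}
    (hX : constantCoeff (σ := σ) (R := L) X = 0) : constantCoeff (σ := σ) (R := L) (fsub1 c X) = 0 := by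
  rw [← coeff_zero_eq_constantCoeff_apply, coeff_fsub1 hX 0 (le_refl _)]
  have h0 : tdeg (0 : σ →₀ ℕ) = 0 := by simp [tdeg]
  rw [h0]
  simp [hc]

lemma constantCoeff_neg {G : FGL L} {X : MvPowerSeries σ L}
    (hX : constantCoeff (σ := σ) (R := L) X = 0) : constantCoeff (σ := σ) (R := L) (G.neg X) = 0 :=
  constantCoeff_fsub1 G.ch_zero hX

/-- the first-row coefficients of the universal formal group law -/
lemma fgl_a_zero (G : FGL L) (k : ℕ) : G.a k 0 = if k = 1 then 1 else 0 := by
  classical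
  have h0 : constantCoeff (σ := Unit) (R := L) (X () : MvPowerSeries Unit L) = 0 := constantCoeff_X ()
  have hXY := G.add_zero' (X () : MvPowerSeries Unit L) h0
  have hc := congrArg (coeff (R := L) (Finsupp.single () k)) hXY
  rw [coeff_X] at hc
  rw [coeff_fadd h0 (map_zero _) _ (le_of_eq (by rw [tdeg_single]))] at hc
  have hsum : ∑ p ∈ Finset.range (k+1) ×ˢ Finset.range (k+1),
      G.a p.1 p.2 * coeff (R := L) (Finsupp.single () k)
        ((X () : MvPowerSeries Unit L) ^ p.1 * (0 : MvPowerSeries Unit L) ^ p.2)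
      = G.a k 0 := by
    rw [Finset.sum_eq_single (k, 0)]
    · rw [pow_zero, mul_one, X_pow_eq, coeff_monomial_same, mul_one]
    · intro p hp hne
      simp only [Finset.mem_product, Finset.mem_range] at hp
      rcases Nat.eq_zero_or_pos p.2 with h2 | h2
      · have h1 : p.1 ≠ k := by
          intro h; exact hne (Prod.ext h h2)
        rw [h2, pow_zero, mul_one, X_pow_eq, coeff_monomial, if_neg, mul_zero]
        intro hcon
        have := DFunLike.congr_fun hcon ()
        simp only [Finsupp.single_eq_same] at this
        exact h1 this.symm
      · rw [zero_pow (by omega), mul_zero, map_zero, mul_zero]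
    · intro h
      exact absurd (by simp only [Finset.mem_product, Finset.mem_range]; omega) h
  rw [hsum] at hc
  rw [hc]
  by_cases hk : k = 1
  · subst hk; simp
  · rw [if_neg hk, if_neg]
    intro hcon
    have := DFunLike.congr_fun hcon ()
    simp only [Finsupp.single_eq_same] at this
    exact hk this

/-- `∑_{q<p} X_u^q X_v^{p-1-q}` -/
def geomS (u v : σ) (p : ℕ) : MvPowerSeries σ L :=
  ∑ q ∈ Finset.range p, (X u : MvPowerSeries σ L) ^ q * (X v) ^ (p - 1 - q)

lemma ordGe_X (u : σ) : OrdGe (X u : MvPowerSeries σ L) 1 :=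
  ordGe_one (constantCoeff_X u)

lemma ordGe_geomS (u v : σ) (p : ℕ) : OrdGe (geomS u v p : MvPowerSeries σ L) (p - 1) := by
  refine ordGe_sum fun q hq => ?_
  have h := ((ordGe_X (L := L) u).pow q).mul ((ordGe_X (L := L) v).pow (p - 1 - q))
  refine h.mono ?_
  simp only [Finset.mem_range] at hq
  omega

lemma geomS_mul_sub (u v : σ) (p : ℕ) :
    (geomS u v p : MvPowerSeries σ L) * ((X u : MvPowerSeries σ L) - X v) =
      (X u) ^ p - (X v) ^ p := geom_sum₂_mul _ _ p

lemma constantCoeff_geomS (u v : σ) (p : ℕ) :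
    constantCoeff (σ := σ) (R := L) (geomS u v p) = if p = 1 then 1 else 0 := by
  rcases p with _ | p
  · simp [geomS]
  rcases p with _ | p
  · simp [geomS]
  · rw [if_neg (by omega)]
    have : OrdGe (geomS u v (p+2) : MvPowerSeries σ L) (p+1) := ordGe_geomS u v (p+2)
    have h0 := this 0 (by simp [tdeg])
    simpa [coeff_zero_eq_constantCoeff] using h0

/-- The quotient series in the key factorization. -/
def Gfac (a : ℕ → ℕ → L) (u v : σ) (Y : MvPowerSeries σ L) : MvPowerSeries σ L :=
  fun d => ∑ p ∈ Finset.range ((d.sum fun _ n => n) + 2) ×ˢ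
      Finset.range ((d.sum fun _ n => n) + 2),
    a p.1 p.2 * coeff (R := L) d (geomS u v p.1 * Y ^ p.2)

lemma coeff_Gfac {a : ℕ → ℕ → L} {u v : σ} {Y : MvPowerSeries σ L}
    (hY : constantCoeff (σ := σ) (R := L) Y = 0) (d : σ →₀ ℕ) {N : ℕ} (hN : tdeg d + 2 ≤ N) :
    coeff (R := L) d (Gfac a u v Y) =
      ∑ p ∈ Finset.range N ×ˢ Finset.range N, a p.1 p.2 * coeff (R := L) d (geomS u v p.1 * Y ^ p.2) := by
  have h0 : coeff (R := L) d (Gfac a u v Y) = ∑ p ∈ Finset.range (tdeg d + 2) ×ˢ Finset.range (tdeg d + 2),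
      a p.1 p.2 * coeff (R := L) d (geomS u v p.1 * Y ^ p.2) := rfl
  rw [h0]
  refine Finset.sum_subset ?_ ?_
  · intro p hp
    simp only [Finset.mem_product, Finset.mem_range] at hp ⊢
    omega
  · intro p hp hnp
    simp only [Finset.mem_product, Finset.mem_range] at hp hnp
    have hord : OrdGe (geomS u v p.1 * Y ^ p.2) (p.1 - 1 + p.2) :=
      (ordGe_geomS u v p.1).mul ((ordGe_one hY).pow p.2)
    rw [hord d (by omega), mul_zero]

lemma constantCoeff_Gfac (G : FGL L) {u v : σ} {Y : MvPowerSeries σ L}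
    (hY : constantCoeff (σ := σ) (R := L) Y = 0) :
    constantCoeff (σ := σ) (R := L) (Gfac G.a u v Y) = 1 := by
  classical
  rw [← coeff_zero_eq_constantCoeff_apply, coeff_Gfac (N := 2) hY 0 (le_of_eq (by simp [tdeg]))]
  have : ∀ p ∈ Finset.range 2 ×ˢ Finset.range 2, p ≠ (1, 0) →
      G.a p.1 p.2 * coeff (R := L) 0 (geomS u v p.1 * Y ^ p.2) = 0 := by
    intro p hp hne
    simp only [Finset.mem_product, Finset.mem_range] at hp
    rw [coeff_zero_eq_constantCoeff_apply, map_mul, map_pow, constantCoeff_geomS]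
    rcases Nat.eq_zero_or_pos p.2 with h2 | h2
    · have h1 : p.1 ≠ 1 := fun h => hne (Prod.ext h h2)
      rw [if_neg h1, zero_mul, mul_zero]
    · rw [hY, zero_pow (by omega), mul_zero, mul_zero]
  rw [Finset.sum_eq_single_of_mem (1, 0) (by simp) this]
  rw [coeff_zero_eq_constantCoeff_apply, map_mul, map_pow, constantCoeff_geomS]
  simp [fgl_a_zero G]

/-- The key factorization: substituting two variables into `F(·, Y)` differ by a
multiple of the difference of the variables. -/
lemma fadd_sub_fadd (a : ℕ → ℕ → L) (u v : σ) {Y : MvPowerSeries σ L}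
    (hY : constantCoeff (σ := σ) (R := L) Y = 0) :
    fadd a (X u) Y - fadd a (X v) Y = ((X u : MvPowerSeries σ L) - X v) * Gfac a u v Y := by
  classical
  apply MvPowerSeries.ext
  intro d
  rw [map_sub, coeff_fadd (constantCoeff_X u) hY d (le_trans (by omega) (le_refl (tdeg d + 2))),
    coeff_fadd (constantCoeff_X v) hY d (by omega : tdeg d + 1 ≤ tdeg d + 2), ← Finset.sum_sub_distrib]
  rw [coeff_mul]
  have hstep : ∀ q ∈ Finset.HasAntidiagonal.antidiagonal d,
      coeff (R := L) q.1 ((X u : MvPowerSeries σ L) - X v) * coeff (R := L) q.2 (Gfac a u v Y) =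
      ∑ p ∈ Finset.range (tdeg d + 2) ×ˢ Finset.range (tdeg d + 2),
        coeff (R := L) q.1 ((X u : MvPowerSeries σ L) - X v) *
          (a p.1 p.2 * coeff (R := L) q.2 (geomS u v p.1 * Y ^ p.2)) := by
    intro q hq
    have hqd : q.1 + q.2 = d := Finset.HasAntidiagonal.mem_antidiagonal.mp hq
    have : tdeg q.2 ≤ tdeg d := by
      have := tdeg_add q.1 q.2
      rw [hqd] at this
      omega
    rw [coeff_Gfac (N := tdeg d + 2) hY q.2 (by omega), Finset.mul_sum]
  rw [Finset.sum_congr rfl hstep, Finset.sum_comm]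
  refine Finset.sum_congr rfl fun p _ => ?_
  have : ∑ q ∈ Finset.HasAntidiagonal.antidiagonal d,
      coeff (R := L) q.1 ((X u : MvPowerSeries σ L) - X v) *
        (a p.1 p.2 * coeff (R := L) q.2 (geomS u v p.1 * Y ^ p.2)) =
      a p.1 p.2 * ∑ q ∈ Finset.HasAntidiagonal.antidiagonal d,
        coeff (R := L) q.1 ((X u : MvPowerSeries σ L) - X v) * coeff (R := L) q.2 (geomS u v p.1 * Y ^ p.2) := by
    rw [Finset.mul_sum]
    exact Finset.sum_congr rfl fun q _ => by ring
  rw [this, ← coeff_mul]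
  have hassoc : ((X u : MvPowerSeries σ L) - X v) * (geomS u v p.1 * Y ^ p.2)
      = ((X u : MvPowerSeries σ L) ^ p.1 - (X v) ^ p.1) * Y ^ p.2 := by
    rw [← mul_assoc, mul_comm ((X u : MvPowerSeries σ L) - X v) (geomS u v p.1), geomS_mul_sub]
  rw [hassoc, sub_mul, map_sub, mul_sub]

/-- For a formal group law, `X u +_F \bar{X v} = (X u - X v) * (unit)`. -/
lemma fadd_neg_eq (G : FGL L) (u v : σ) :
    ∃ U : MvPowerSeries σ L, constantCoeff (σ := σ) (R := L) U = 1 ∧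
      fadd G.a (X u) (G.neg (X v)) = ((X u : MvPowerSeries σ L) - X v) * U := by
  refine ⟨Gfac G.a u v (G.neg (X v)), constantCoeff_Gfac G (constantCoeff_neg (G := G) (constantCoeff_X v)), ?_⟩
  have h0 : fadd G.a (X v) (G.neg (X v)) = 0 := G.add_inv' (X v : MvPowerSeries σ L) (constantCoeff_X v)
  have := fadd_sub_fadd G.a u v (Y := G.neg (X v)) (constantCoeff_neg (G := G) (constantCoeff_X v))
  rw [h0, sub_zero] at this
  exact this

/- ### Renaming variables along an equivalence -/

lemma equivMapDomain_add (e : σ ≃ σ) (d d' : σ →₀ ℕ) :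
    Finsupp.equivMapDomain e (d + d') = Finsupp.equivMapDomain e d + Finsupp.equivMapDomain e d' := by
  ext s
  simp [Finsupp.equivMapDomain_apply]

lemma equivMapDomain_symm_apply_eq (e : σ ≃ σ) (d : σ →₀ ℕ) (s : σ) :
    Finsupp.equivMapDomain e.symm d s = d (e.symm.symm s) := by
  simp [Finsupp.equivMapDomain_apply]

lemma tdeg_equivMapDomain (e : σ ≃ σ) (d : σ →₀ ℕ) :
    tdeg (Finsupp.equivMapDomain e d) = tdeg d := by
  unfold tdeg
  rw [Finsupp.sum_equivMapDomain]

lemma equivMapDomain_eq_iff (e : σ ≃ σ) (d c : σ →₀ ℕ) :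
    Finsupp.equivMapDomain e.symm d = c ↔ d = Finsupp.equivMapDomain e c := by
  constructor
  · intro h
    subst h
    rw [← Finsupp.equivMapDomain_trans, Equiv.symm_trans_self, Finsupp.equivMapDomain_refl]
  · intro h
    subst h
    rw [← Finsupp.equivMapDomain_trans, Equiv.self_trans_symm, Finsupp.equivMapDomain_refl]

/-- Renaming the variables of a multivariate power series along a bijection. -/
def prename (e : σ ≃ σ) : MvPowerSeries σ L →+* MvPowerSeries σ L where
  toFun f := fun d => f (Finsupp.equivMapDomain e.symm d)
  map_one' := by
    classical
    funext d
    show coeff (R := L) _ 1 = coeff (R := L) d 1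
    rw [coeff_one, coeff_one]
    congr 1
    simp only [eq_iff_iff]
    constructor
    · intro h
      ext s
      have := DFunLike.congr_fun h (e.symm s)
      simpa [Finsupp.equivMapDomain_apply] using this
    · intro h; subst h; rfl
  map_mul' := by
    classical
    intro f g
    funext d
    show coeff (R := L) _ (f * g) = coeff (R := L) d ((_ : MvPowerSeries σ L) * _)
    rw [coeff_mul]
    erw [coeff_mul]
    refine Finset.sum_nbij' (fun p => (Finsupp.equivMapDomain e p.1, Finsupp.equivMapDomain e p.2))
      (fun p => (Finsupp.equivMapDomain e.symm p.1, Finsupp.equivMapDomain e.symm p.2))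
      ?_ ?_ ?_ ?_ ?_
    · intro p hp
      rw [Finset.HasAntidiagonal.mem_antidiagonal] at hp ⊢
      rw [← equivMapDomain_add, hp]
      ext s
      simp [Finsupp.equivMapDomain_apply]
    · intro p hp
      rw [Finset.HasAntidiagonal.mem_antidiagonal] at hp ⊢
      rw [← equivMapDomain_add, hp]
    · intro p _
      ext s <;> simp [Finsupp.equivMapDomain_apply]
    · intro p _
      ext s <;> simp [Finsupp.equivMapDomain_apply]
    · intro p _
      show f p.1 * g p.2 = f _ * g _
      congr 1 <;> · congr 1; ext s; simp [Finsupp.equivMapDomain_apply]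
  map_zero' := rfl
  map_add' := fun f g => rfl

lemma prename_apply (e : σ ≃ σ) (f : MvPowerSeries σ L) (d : σ →₀ ℕ) :
    coeff (R := L) d (prename e f) = coeff (R := L) (Finsupp.equivMapDomain e.symm d) f := rfl

lemma prename_X (e : σ ≃ σ) (s : σ) :
    prename e (X s : MvPowerSeries σ L) = X (e s) := by
  classical
  apply MvPowerSeries.ext
  intro d
  rw [prename_apply, coeff_X, coeff_X]
  congr 1
  rw [eq_iff_iff, equivMapDomain_eq_iff, Finsupp.equivMapDomain_single]

lemma prename_constantCoeff (e : σ ≃ σ) (f : MvPowerSeries σ L) :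
    constantCoeff (σ := σ) (R := L) (prename e f) = constantCoeff (σ := σ) (R := L) f := by
  rw [← coeff_zero_eq_constantCoeff_apply, ← coeff_zero_eq_constantCoeff_apply, prename_apply,
    Finsupp.equivMapDomain_zero]

lemma prename_fadd (e : σ ≃ σ) (a : ℕ → ℕ → L) (Xs Ys : MvPowerSeries σ L) :
    prename e (fadd a Xs Ys) = fadd a (prename e Xs) (prename e Ys) := by
  apply MvPowerSeries.ext
  intro d
  rw [prename_apply]
  show coeff (R := L) _ (fadd a Xs Ys) = coeff (R := L) d (fadd a _ _)
  have hL : coeff (R := L) (Finsupp.equivMapDomain e.symm d) (fadd a Xs Ys) =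
      ∑ p ∈ Finset.range (tdeg d + 1) ×ˢ Finset.range (tdeg d + 1),
        a p.1 p.2 * coeff (R := L) (Finsupp.equivMapDomain e.symm d) (Xs ^ p.1 * Ys ^ p.2) := by
    have : coeff (R := L) (Finsupp.equivMapDomain e.symm d) (fadd a Xs Ys) =
        ∑ p ∈ Finset.range (tdeg (Finsupp.equivMapDomain e.symm d) + 1) ×ˢ
            Finset.range (tdeg (Finsupp.equivMapDomain e.symm d) + 1),
          a p.1 p.2 * coeff (R := L) (Finsupp.equivMapDomain e.symm d) (Xs ^ p.1 * Ys ^ p.2) := rfl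
    rw [this, tdeg_equivMapDomain]
  have hR : coeff (R := L) d (fadd a (prename e Xs) (prename e Ys)) =
      ∑ p ∈ Finset.range (tdeg d + 1) ×ˢ Finset.range (tdeg d + 1),
        a p.1 p.2 * coeff (R := L) d ((prename e Xs) ^ p.1 * (prename e Ys) ^ p.2) := rfl
  rw [hL, hR]
  refine Finset.sum_congr rfl fun p _ => ?_
  congr 1
  have : (prename e Xs) ^ p.1 * (prename e Ys) ^ p.2 = prename e (Xs ^ p.1 * Ys ^ p.2) := by
    rw [map_mul, map_pow, map_pow]
  rw [this, prename_apply]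

lemma prename_fsub1 (e : σ ≃ σ) (c : ℕ → L) (Xs : MvPowerSeries σ L) :
    prename e (fsub1 c Xs) = fsub1 c (prename e Xs) := by
  apply MvPowerSeries.ext
  intro d
  rw [prename_apply]
  have hL : coeff (R := L) (Finsupp.equivMapDomain e.symm d) (fsub1 c Xs) =
      ∑ k ∈ Finset.range (tdeg d + 1), c k * coeff (R := L) (Finsupp.equivMapDomain e.symm d) (Xs ^ k) := by
    have : coeff (R := L) (Finsupp.equivMapDomain e.symm d) (fsub1 c Xs) =
        ∑ k ∈ Finset.range (tdeg (Finsupp.equivMapDomain e.symm d) + 1),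
          c k * coeff (R := L) (Finsupp.equivMapDomain e.symm d) (Xs ^ k) := rfl
    rw [this, tdeg_equivMapDomain]
  have hR : coeff (R := L) d (fsub1 c (prename e Xs)) =
      ∑ k ∈ Finset.range (tdeg d + 1), c k * coeff (R := L) d ((prename e Xs) ^ k) := rfl
  rw [hL, hR]
  refine Finset.sum_congr rfl fun k _ => ?_
  congr 1
  rw [← map_pow, prename_apply]

lemma prename_neg (e : σ ≃ σ) (G : FGL L) (Xs : MvPowerSeries σ L) :
    prename e (G.neg Xs) = G.neg (prename e Xs) := prename_fsub1 e G.ch Xs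

lemma prename_facPow (e : σ ≃ σ) (G : FGL L) (t : MvPowerSeries σ L)
    (bs : ℕ → MvPowerSeries σ L) (hbs : ∀ j, prename e (bs j) = bs j) (k : ℕ) :
    prename e (facPow G t bs k) = facPow G (prename e t) bs k := by
  unfold facPow
  rw [map_prod]
  exact Finset.prod_congr rfl fun i _ => by rw [prename_fadd, hbs]

lemma prename_facPowQ (e : σ ≃ σ) (G : FGL L) (t : MvPowerSeries σ L)
    (bs : ℕ → MvPowerSeries σ L) (hbs : ∀ j, prename e (bs j) = bs j) (k : ℕ) :
    prename e (facPowQ G t bs k) = facPowQ G (prename e t) bs k := by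
  cases k with
  | zero => simp [facPowQ]
  | succ k =>
      show prename e (fadd G.a t t * facPow G t bs k) = fadd G.a _ _ * facPow G _ bs k
      rw [map_mul, prename_fadd, prename_facPow e G t bs hbs k]

/- ### Two-coordinate surgery on exponents -/

section Surgery

variable [DecidableEq σ]

/-- Replace the `u`- and `v`-coordinates of `d` by `p` and `q`. -/
def set2 (u v : σ) (d : σ →₀ ℕ) (p q : ℕ) : σ →₀ ℕ :=
  (d.erase u).erase v + Finsupp.single u p + Finsupp.single v q

variable {u v : σ}

lemma set2_apply (huv : u ≠ v) (d : σ →₀ ℕ) (p q : ℕ) (s : σ) :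
    set2 u v d p q s = if s = u then p else if s = v then q else d s := by
  unfold set2
  rw [Finsupp.add_apply, Finsupp.add_apply, Finsupp.erase_apply, Finsupp.erase_apply,
    Finsupp.single_apply, Finsupp.single_apply]
  rcases eq_or_ne s u with rfl | hsu
  · simp [huv, Ne.symm huv]
  · rcases eq_or_ne s v with rfl | hsv
    · simp [Ne.symm hsu, hsu]
    · simp [hsu, hsv, Ne.symm hsu, Ne.symm hsv]

lemma set2_self (huv : u ≠ v) (d : σ →₀ ℕ) : set2 u v d (d u) (d v) = d := by
  ext s
  rw [set2_apply huv]
  split_ifs with h1 h2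
  · rw [h1]
  · rw [h2]
  · rfl

lemma set2_set2 (huv : u ≠ v) (d : σ →₀ ℕ) (p q p' q' : ℕ) :
    set2 u v (set2 u v d p q) p' q' = set2 u v d p' q' := by
  ext s
  rw [set2_apply huv, set2_apply huv, set2_apply huv]
  split_ifs <;> rfl

lemma set2_add (huv : u ≠ v) (d e : σ →₀ ℕ) (p q p' q' : ℕ) :
    set2 u v d p q + set2 u v e p' q' = set2 u v (d + e) (p + p') (q + q') := by
  ext s
  rw [Finsupp.add_apply, set2_apply huv, set2_apply huv, set2_apply huv]
  split_ifs <;> simp [Finsupp.add_apply]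

lemma set2_u (huv : u ≠ v) (d : σ →₀ ℕ) (p q : ℕ) : set2 u v d p q u = p := by
  rw [set2_apply huv]; simp

lemma set2_v (huv : u ≠ v) (d : σ →₀ ℕ) (p q : ℕ) : set2 u v d p q v = q := by
  rw [set2_apply huv]; simp [Ne.symm huv]

/-- collapse the `v`-coordinate onto the `u`-coordinate -/
def Ecol (u v : σ) (d : σ →₀ ℕ) : σ →₀ ℕ := set2 u v d (d u + d v) 0

lemma Ecol_u (huv : u ≠ v) (d : σ →₀ ℕ) : Ecol u v d u = d u + d v := set2_u huv _ _ _

lemma Ecol_set2 (huv : u ≠ v) (d : σ →₀ ℕ) (p q : ℕ) :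
    Ecol u v (set2 u v d p q) = set2 u v d (p + q) 0 := by
  unfold Ecol
  rw [set2_u huv, set2_v huv, set2_set2 huv]

lemma Ecol_add (huv : u ≠ v) (d e : σ →₀ ℕ) :
    Ecol u v (d + e) = Ecol u v d + Ecol u v e := by
  ext s
  rw [Finsupp.add_apply]
  unfold Ecol
  rw [set2_apply huv, set2_apply huv, set2_apply huv]
  split_ifs <;> simp [Finsupp.add_apply] <;> ring

/-- the fiberwise "substitute `X v := X u`" operation -/
def pim (u v : σ) (f : MvPowerSeries σ L) : MvPowerSeries σ L :=
  fun d => if d v = 0 then ∑ j ∈ Finset.range (d u + 1), f (set2 u v d (d u - j) j) else 0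

lemma sigma_mk_eq {γ β : Type} {a a' : γ} {b b' : β} (h1 : a = a') (h2 : b = b') :
    (⟨a, b⟩ : Σ _ : γ, β) = ⟨a', b'⟩ := by subst h1; subst h2; rfl

lemma set2_Ecol (huv : u ≠ v) (e : σ →₀ ℕ) :
    set2 u v (Ecol u v e) (Ecol u v e u - e v) (e v) = e := by
  unfold Ecol
  rw [set2_u huv, set2_set2 huv]
  have h : e u + e v - e v = e u := by omega
  rw [h, set2_self huv]

lemma Ecol_set2_sub (huv : u ≠ v) {dd : σ →₀ ℕ} {jj : ℕ} (h0 : dd v = 0) (hle : jj ≤ dd u) :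
    Ecol u v (set2 u v dd (dd u - jj) jj) = dd := by
  rw [Ecol_set2 huv]
  have h : dd u - jj + jj = dd u := by omega
  rw [h, ← h0, set2_self huv]

lemma pim_mul (huv : u ≠ v) (f g : MvPowerSeries σ L) :
    pim u v (f * g) = pim u v f * pim u v g := by
  funext d
  show pim u v (f * g) d = coeff (R := L) d (pim u v f * pim u v g)
  rw [coeff_mul]
  rcases eq_or_ne (d v) 0 with hv | hv
  case inr =>
    have hz : ∀ p ∈ Finset.HasAntidiagonal.antidiagonal d,
        coeff (R := L) p.1 (pim u v f) * coeff (R := L) p.2 (pim u v g) = 0 := by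
      intro p hp
      have hpd : p.1 + p.2 = d := Finset.HasAntidiagonal.mem_antidiagonal.mp hp
      have hvv : p.1 v + p.2 v = d v := by rw [← Finsupp.add_apply, hpd]
      rcases Nat.eq_zero_or_pos (p.1 v) with h1 | h1
      · have h2 : p.2 v ≠ 0 := by omega
        have hc : coeff (R := L) p.2 (pim u v g) = 0 := by
          show pim u v g p.2 = 0
          rw [pim, if_neg h2]
        rw [hc, mul_zero]
      · have hc : coeff (R := L) p.1 (pim u v f) = 0 := by
          show pim u v f p.1 = 0
          rw [pim, if_neg (by omega)]
        rw [hc, zero_mul]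
    rw [Finset.sum_eq_zero hz]
    show (if d v = 0 then ∑ j ∈ Finset.range (d u + 1), (f * g) (set2 u v d (d u - j) j)
      else 0) = 0
    rw [if_neg hv]
  case inl =>
  show (if d v = 0 then ∑ j ∈ Finset.range (d u + 1), (f * g) (set2 u v d (d u - j) j)
    else 0) = _
  rw [if_pos hv]
  calc ∑ j ∈ Finset.range (d u + 1), (f * g) (set2 u v d (d u - j) j)
      = ∑ j ∈ Finset.range (d u + 1), ∑ p ∈ Finset.HasAntidiagonal.antidiagonal (set2 u v d (d u - j) j),
          f p.1 * g p.2 := by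
        refine Finset.sum_congr rfl fun j _ => ?_
        show coeff (R := L) _ (f * g) = _
        rw [coeff_mul]
        rfl
    _ = ∑ x ∈ (Finset.range (d u + 1)).sigma
          (fun j => Finset.HasAntidiagonal.antidiagonal (set2 u v d (d u - j) j)),
          f x.2.1 * g x.2.2 :=
        Finset.sum_sigma' _ _ _
    _ = ∑ x ∈ (Finset.HasAntidiagonal.antidiagonal d).sigma
          (fun p => Finset.range (p.1 u + 1) ×ˢ Finset.range (p.2 u + 1)),
          f (set2 u v x.1.1 (x.1.1 u - x.2.1) x.2.1) *
            g (set2 u v x.1.2 (x.1.2 u - x.2.2) x.2.2) := by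
        refine Finset.sum_nbij'
          (fun x => ⟨(Ecol u v x.2.1, Ecol u v x.2.2), (x.2.1 v, x.2.2 v)⟩)
          (fun x => ⟨x.2.1 + x.2.2, (set2 u v x.1.1 (x.1.1 u - x.2.1) x.2.1,
              set2 u v x.1.2 (x.1.2 u - x.2.2) x.2.2)⟩) ?_ ?_ ?_ ?_ ?_
        · rintro ⟨j, e1, e2⟩ hx
          simp only [Finset.mem_sigma, Finset.mem_range, Finset.HasAntidiagonal.mem_antidiagonal] at hx
          obtain ⟨hj, he⟩ := hx
          simp only [Finset.mem_sigma, Finset.HasAntidiagonal.mem_antidiagonal, Finset.mem_product,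
            Finset.mem_range]
          refine ⟨?_, ?_, ?_⟩
          · rw [← Ecol_add huv, he, Ecol_set2 huv]
            have h : d u - j + j = d u := by omega
            rw [h, ← hv, set2_self huv]
          · rw [Ecol_u huv]; omega
          · rw [Ecol_u huv]; omega
        · rintro ⟨⟨d1, d2⟩, j1, j2⟩ hx
          simp only [Finset.mem_sigma, Finset.HasAntidiagonal.mem_antidiagonal, Finset.mem_product,
            Finset.mem_range] at hx
          obtain ⟨hdd, hj1, hj2⟩ := hx
          have hu : d1 u + d2 u = d u := by rw [← Finsupp.add_apply, hdd]
          simp only [Finset.mem_sigma, Finset.mem_range, Finset.HasAntidiagonal.mem_antidiagonal]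
          constructor
          · omega
          · rw [set2_add huv, hdd]
            congr 1 <;> omega
        · rintro ⟨j, e1, e2⟩ hx
          simp only [Finset.mem_sigma, Finset.mem_range, Finset.HasAntidiagonal.mem_antidiagonal] at hx
          obtain ⟨hj, he⟩ := hx
          have hjv : e1 v + e2 v = j := by
            rw [← Finsupp.add_apply, he, set2_v huv]
          refine sigma_mk_eq hjv ?_
          rw [Prod.ext_iff]
          exact ⟨set2_Ecol huv e1, set2_Ecol huv e2⟩
        · rintro ⟨⟨d1, d2⟩, j1, j2⟩ hx
          simp only [Finset.mem_sigma, Finset.HasAntidiagonal.mem_antidiagonal, Finset.mem_product,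
            Finset.mem_range] at hx
          obtain ⟨hdd, hj1, hj2⟩ := hx
          have hvv : d1 v + d2 v = d v := by rw [← Finsupp.add_apply, hdd]
          have h1 : Ecol u v (set2 u v d1 (d1 u - j1) j1) = d1 :=
            Ecol_set2_sub huv (by omega : d1 v = 0) (by omega : j1 ≤ d1 u)
          have h2 : Ecol u v (set2 u v d2 (d2 u - j2) j2) = d2 :=
            Ecol_set2_sub huv (by omega : d2 v = 0) (by omega : j2 ≤ d2 u)
          refine sigma_mk_eq (Prod.ext h1 h2) ?_
          rw [Prod.ext_iff]
          constructor <;> · show set2 u v _ _ _ v = _; rw [set2_v huv]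
        · rintro ⟨j, e1, e2⟩ _
          show f e1 * g e2 = f _ * g _
          rw [set2_Ecol huv, set2_Ecol huv]
    _ = ∑ p ∈ Finset.HasAntidiagonal.antidiagonal d, ∑ jj ∈ Finset.range (p.1 u + 1) ×ˢ Finset.range (p.2 u + 1),
          f (set2 u v p.1 (p.1 u - jj.1) jj.1) * g (set2 u v p.2 (p.2 u - jj.2) jj.2) :=
        (Finset.sum_sigma' (Finset.HasAntidiagonal.antidiagonal d)
          (fun p => Finset.range (p.1 u + 1) ×ˢ Finset.range (p.2 u + 1))
          (fun p jj => f (set2 u v p.1 (p.1 u - jj.1) jj.1) *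
            g (set2 u v p.2 (p.2 u - jj.2) jj.2))).symm
    _ = ∑ p ∈ Finset.HasAntidiagonal.antidiagonal d, coeff (R := L) p.1 (pim u v f) * coeff (R := L) p.2 (pim u v g) := by
        refine Finset.sum_congr rfl fun p hp => ?_
        have hpd : p.1 + p.2 = d := Finset.HasAntidiagonal.mem_antidiagonal.mp hp
        have hvv : p.1 v + p.2 v = d v := by rw [← Finsupp.add_apply, hpd]
        have e1 : coeff (R := L) p.1 (pim u v f) = ∑ j ∈ Finset.range (p.1 u + 1),
            f (set2 u v p.1 (p.1 u - j) j) := by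
          show pim u v f p.1 = _
          rw [pim, if_pos (by omega)]
        have e2 : coeff (R := L) p.2 (pim u v g) = ∑ j ∈ Finset.range (p.2 u + 1),
            g (set2 u v p.2 (p.2 u - j) j) := by
          show pim u v g p.2 = _
          rw [pim, if_pos (by omega)]
        rw [e1, e2, Finset.sum_mul_sum, ← Finset.sum_product']

lemma pim_sub (f g : MvPowerSeries σ L) :
    pim u v (f - g) = pim u v f - pim u v g := by
  funext d
  show pim u v (f - g) d = pim u v f d - pim u v g d
  unfold pim
  split_ifs with h
  · rw [← Finset.sum_sub_distrib]
    refine Finset.sum_congr rfl fun j _ => ?_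
    show coeff (R := L) _ (f - g) = _
    rw [map_sub]
    rfl
  · rw [sub_zero]

lemma coeff_X_mul' (s : σ) (h : MvPowerSeries σ L) (d : σ →₀ ℕ) :
    coeff (R := L) d ((X s : MvPowerSeries σ L) * h) =
      if 1 ≤ d s then coeff (R := L) (d - Finsupp.single s 1) h else 0 := by
  rw [X, coeff_monomial_mul]
  by_cases hc : Finsupp.single s 1 ≤ d
  · rw [if_pos hc, if_pos (Finsupp.single_le_iff.mp hc), one_mul]
  · rw [if_neg hc, if_neg (fun hle => hc (Finsupp.single_le_iff.mpr hle))]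

lemma Ecol_single_u (huv : u ≠ v) : Ecol u v (Finsupp.single u 1) = Finsupp.single u 1 := by
  have e1 : (Finsupp.single u 1 : σ →₀ ℕ) u = 1 := Finsupp.single_eq_same
  have e2 : (Finsupp.single u 1 : σ →₀ ℕ) v = 0 := Finsupp.single_eq_of_ne' huv
  ext s
  unfold Ecol
  rw [set2_apply huv, e1, e2]
  split_ifs with h1 h2
  · subst h1; rw [e1]
  · subst h2; rw [e2]
  · rfl

lemma Ecol_single_v (huv : u ≠ v) : Ecol u v (Finsupp.single v 1) = Finsupp.single u 1 := by
  have e1 : (Finsupp.single v 1 : σ →₀ ℕ) v = 1 := Finsupp.single_eq_same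
  have e2 : (Finsupp.single v 1 : σ →₀ ℕ) u = 0 := Finsupp.single_eq_of_ne' (Ne.symm huv)
  ext s
  unfold Ecol
  rw [set2_apply huv, e1, e2]
  split_ifs with h1 h2
  · subst h1; rw [Finsupp.single_eq_same]
  · subst h2; rw [Finsupp.single_eq_of_ne' huv]
  · rw [Finsupp.single_eq_of_ne' (Ne.symm h2), Finsupp.single_eq_of_ne' (Ne.symm h1)]

lemma pim_X_sub (huv : u ≠ v) :
    pim u v ((X u : MvPowerSeries σ L) - X v) = 0 := by
  funext d
  show pim u v ((X u : MvPowerSeries σ L) - X v) d = (0 : L)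
  rw [show pim u v ((X u : MvPowerSeries σ L) - X v) d =
      (if d v = 0 then ∑ j ∈ Finset.range (d u + 1),
        coeff (R := L) (set2 u v d (d u - j) j) ((X u : MvPowerSeries σ L) - X v) else 0) from rfl]
  split_ifs with hv
  swap
  · rfl
  have hterm : ∀ j : ℕ, coeff (R := L) (set2 u v d (d u - j) j) ((X u : MvPowerSeries σ L) - X v) =
      (if set2 u v d (d u - j) j = Finsupp.single u 1 then (1:L) else 0) -
        (if set2 u v d (d u - j) j = Finsupp.single v 1 then (1:L) else 0) := by
    intro j
    rw [map_sub, coeff_X, coeff_X]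
  by_cases hd : d = Finsupp.single u 1
  · subst hd
    have hu1 : (Finsupp.single u 1 : σ →₀ ℕ) u = 1 := Finsupp.single_eq_same
    rw [hu1]
    rw [Finset.sum_range_succ, Finset.sum_range_succ, Finset.range_zero, Finset.sum_empty]
    rw [hu1] at hterm
    rw [hterm 0, hterm 1]
    have h0 : set2 u v (Finsupp.single u 1) (1 - 0) 0 = Finsupp.single u 1 := by
      have he : set2 u v (Finsupp.single u 1) (1 - 0) 0 =
          set2 u v (Finsupp.single u 1) ((Finsupp.single u 1 : σ →₀ ℕ) u)
            ((Finsupp.single u 1 : σ →₀ ℕ) v) := by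
        rw [hu1, Finsupp.single_eq_of_ne' huv]
      rw [he, set2_self huv]
    have h1 : set2 u v (Finsupp.single u 1) (1 - 1) 1 = Finsupp.single v 1 := by
      ext s
      rw [set2_apply huv]
      split_ifs with hs1 hs2
      · subst hs1; rw [Finsupp.single_eq_of_ne' (Ne.symm huv)]
        omega
      · subst hs2; rw [Finsupp.single_eq_same]
      · rw [Finsupp.single_eq_of_ne' (Ne.symm hs2), Finsupp.single_eq_of_ne' (Ne.symm hs1)]
    rw [h0, h1]
    rw [if_pos rfl, if_pos rfl]
    have hne1 : (Finsupp.single u 1 : σ →₀ ℕ) ≠ Finsupp.single v 1 := by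
      intro hc
      have hcc := DFunLike.congr_fun hc u
      rw [Finsupp.single_eq_same, Finsupp.single_eq_of_ne' (Ne.symm huv)] at hcc
      exact one_ne_zero hcc
    have hne2 : (Finsupp.single v 1 : σ →₀ ℕ) ≠ Finsupp.single u 1 := fun hc => hne1 hc.symm
    rw [if_neg hne1, if_neg hne2]
    ring
  · refine Finset.sum_eq_zero fun j hj => ?_
    rw [hterm j]
    have hjle : j ≤ d u := by
      simp only [Finset.mem_range] at hj
      omega
    have hE : Ecol u v (set2 u v d (d u - j) j) = d := Ecol_set2_sub huv hv hjle
    rw [if_neg, if_neg]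
    · ring
    · intro hc
      apply hd
      rw [← hE, hc, Ecol_single_v huv]
    · intro hc
      apply hd
      rw [← hE, hc, Ecol_single_u huv]

lemma sub_single_u_eq (huv : u ≠ v) (d : σ →₀ ℕ) :
    d - Finsupp.single u 1 = set2 u v d (d u - 1) (d v) := by
  ext s
  rw [Finsupp.tsub_apply, set2_apply huv]
  split_ifs with h1 h2
  · subst h1; rw [Finsupp.single_apply, if_pos rfl]
  · subst h2; rw [Finsupp.single_apply, if_neg huv]; rfl
  · rw [Finsupp.single_apply, if_neg (fun hc => h1 hc.symm)]
    rfl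

lemma sub_single_v_eq (huv : u ≠ v) (d : σ →₀ ℕ) :
    d - Finsupp.single v 1 = set2 u v d (d u) (d v - 1) := by
  ext s
  rw [Finsupp.tsub_apply, set2_apply huv]
  split_ifs with h1 h2
  · subst h1; rw [Finsupp.single_apply, if_neg (Ne.symm huv)]; rfl
  · subst h2; rw [Finsupp.single_apply, if_pos rfl]
  · rw [Finsupp.single_apply, if_neg (fun hc => h2 hc.symm)]
    rfl

lemma dvd_of_pim_eq_zero (huv : u ≠ v) {f : MvPowerSeries σ L}
    (hf : pim u v f = 0) : ((X u : MvPowerSeries σ L) - X v) ∣ f := by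
  have hf' : ∀ d : σ →₀ ℕ, d v = 0 →
      ∑ j ∈ Finset.range (d u + 1), f (set2 u v d (d u - j) j) = 0 := by
    intro d hd
    have hcf := congrFun hf d
    rw [pim] at hcf
    rw [if_pos hd] at hcf
    exact hcf
  classical
  set h : MvPowerSeries σ L :=
    fun d => ∑ j ∈ Finset.range (d v + 1), f (set2 u v d (d u + 1 + j) (d v - j)) with hh
  refine ⟨h, ?_⟩
  apply MvPowerSeries.ext
  intro d
  have hval : ∀ p q : ℕ, coeff (R := L) (set2 u v d p q) h =
      ∑ j ∈ Finset.range (q + 1), f (set2 u v d (p + 1 + j) (q - j)) := by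
    intro p q
    show h (set2 u v d p q) = _
    rw [hh]
    simp only
    rw [set2_u huv, set2_v huv]
    exact Finset.sum_congr rfl fun j _ => by rw [set2_set2 huv]
  rw [sub_mul, map_sub, coeff_X_mul', coeff_X_mul', sub_single_u_eq huv, sub_single_v_eq huv]
  rcases Nat.eq_zero_or_pos (d u) with hdu | hdu
  · rcases Nat.eq_zero_or_pos (d v) with hdv | hdv
    · -- both coordinates zero
      rw [if_neg (by omega), if_neg (by omega), sub_zero]
      have hD := hf' d hdv
      rw [hdu, Finset.sum_range_one] at hD
      have hdd : set2 u v d (0 - 0) 0 = d := by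
        have he : set2 u v d (0 - 0) 0 = set2 u v d (d u) (d v) := by rw [hdu, hdv]
        rw [he, set2_self huv]
      rw [hdd] at hD
      exact hD
    · -- d u = 0, d v = q + 1
      obtain ⟨q, hq⟩ : ∃ q, d v = q + 1 := ⟨d v - 1, by omega⟩
      rw [if_neg (by omega), if_pos (by omega), zero_sub, hval, hdu, hq]
      rw [(by omega : q + 1 - 1 + 1 = q + 1)]
      have hnorm : ∀ j ∈ Finset.range (q + 1),
          f (set2 u v d (0 + 1 + j) (q + 1 - 1 - j)) = f (set2 u v d (1 + j) (q - j)) := by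
        intro j hj
        have e1 : 0 + 1 + j = 1 + j := by omega
        have e2 : q + 1 - 1 - j = q - j := by omega
        rw [e1, e2]
      rw [Finset.sum_congr rfl hnorm]
      have hD := hf' (set2 u v d (q + 1) 0) (set2_v huv d _ _)
      rw [set2_u huv] at hD
      have hsum : ∀ j ∈ Finset.range (q + 2),
          f (set2 u v (set2 u v d (q+1) 0) (q + 1 - j) j) = f (set2 u v d (q + 1 - j) j) := by
        intro j _
        rw [set2_set2 huv]
      rw [Finset.sum_congr rfl hsum, Finset.sum_range_succ] at hD
      have hlast : set2 u v d (q + 1 - (q + 1)) (q + 1) = d := by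
        have h1 : set2 u v d (q + 1 - (q + 1)) (q + 1) = set2 u v d (d u) (d v) := by
          rw [hdu, hq]
          congr 1
          omega
        rw [h1, set2_self huv]
      rw [hlast] at hD
      have h1 : ∑ j ∈ Finset.range (q+1), f (set2 u v d (1 + j) (q - j)) =
          ∑ j ∈ Finset.range (q+1), f (set2 u v d (q + 1 - j) j) := by
        rw [← Finset.sum_range_reflect (fun j => f (set2 u v d (q + 1 - j) j)) (q+1)]
        refine Finset.sum_congr rfl fun j hj => ?_
        simp only [Finset.mem_range] at hj
        have e1 : q + 1 - 1 - j = q - j := by omega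
        have e2 : q + 1 - (q - j) = 1 + j := by omega
        rw [e1, e2]
      rw [h1]
      have hfd : f d = coeff (R := L) d f := rfl
      rw [hfd] at hD
      linear_combination hD
  · -- d u ≥ 1
    rw [if_pos (show (1:ℕ) ≤ d u by omega), hval]
    have hnorm : ∀ j ∈ Finset.range (d v + 1),
        f (set2 u v d (d u - 1 + 1 + j) (d v - j)) = f (set2 u v d (d u + j) (d v - j)) := by
      intro j hj
      have e1 : d u - 1 + 1 + j = d u + j := by omega
      rw [e1]
    rw [Finset.sum_congr rfl hnorm]
    rcases Nat.eq_zero_or_pos (d v) with hdv | hdv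
    · rw [if_neg (by omega), sub_zero, hdv, Finset.sum_range_one]
      have hdd : set2 u v d (d u + 0) (0 - 0) = d := by
        have he : set2 u v d (d u + 0) (0 - 0) = set2 u v d (d u) (d v) := by
          rw [hdv]; norm_num
        rw [he, set2_self huv]
      rw [hdd]
      rfl
    · obtain ⟨q, hq⟩ : ∃ q, d v = q + 1 := ⟨d v - 1, by omega⟩
      rw [if_pos (by omega), hval, hq]
      rw [(by omega : q + 1 - 1 + 1 = q + 1)]
      rw [Finset.sum_range_succ' (fun j => f (set2 u v d (d u + j) (q + 1 - j))) (q + 1)]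
      have hnorm2 : ∀ j ∈ Finset.range (q + 1),
          f (set2 u v d (d u + (j + 1)) (q + 1 - (j + 1))) =
            f (set2 u v d (d u + 1 + j) (q + 1 - 1 - j)) := by
        intro j hj
        have e1 : d u + (j + 1) = d u + 1 + j := by omega
        have e2 : q + 1 - (j + 1) = q + 1 - 1 - j := by omega
        rw [e1, e2]
      rw [Finset.sum_congr rfl hnorm2]
      have hdd : set2 u v d (d u + 0) (q + 1 - 0) = d := by
        have he : set2 u v d (d u + 0) (q + 1 - 0) = set2 u v d (d u) (d v) := by
          rw [hq]; norm_num
        rw [he, set2_self huv]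
      rw [hdd]
      have hfd : f d = coeff (R := L) d f := rfl
      rw [hfd]
      ring

lemma X_sub_ne_zero [Nontrivial L] (huv : u ≠ v) :
    ((X u : MvPowerSeries σ L) - X v) ≠ 0 := by
  intro hc
  have h1 := congrArg (coeff (R := L) (Finsupp.single u 1)) hc
  rw [map_sub, coeff_X, coeff_X, if_pos rfl, if_neg, map_zero] at h1
  · rw [sub_zero] at h1
    exact one_ne_zero h1
  · intro hc2
    have := DFunLike.congr_fun hc2 u
    simp [Finsupp.single_apply, huv, Ne.symm huv] at this

lemma prime_X_sub [IsDomain L] (huv : u ≠ v) :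
    Prime ((X u : MvPowerSeries σ L) - X v) := by
  refine ⟨X_sub_ne_zero huv, ?_, ?_⟩
  · intro hun
    have h1 : IsUnit (constantCoeff (σ := σ) (R := L) ((X u : MvPowerSeries σ L) - X v)) :=
      isUnit_constantCoeff _ hun
    rw [map_sub, constantCoeff_X, constantCoeff_X, sub_zero] at h1
    exact zero_ne_one (isUnit_zero_iff.mp h1)
  · rintro a b ⟨c, hc⟩
    have hz : pim u v a * pim u v b = 0 := by
      rw [← pim_mul huv, hc, pim_mul huv, pim_X_sub huv, zero_mul]
    rcases mul_eq_zero.mp hz with h | h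
    · exact Or.inl (dvd_of_pim_eq_zero huv h)
    · exact Or.inr (dvd_of_pim_eq_zero huv h)

end Surgery

lemma prod_primes_dvd_of_dvd {α : Type} [CommRing α] [IsDomain α] {ι : Type}
    [DecidableEq ι] (s : Finset ι) (p : ι → α) :
    (∀ i ∈ s, Prime (p i)) → (∀ i ∈ s, ∀ j ∈ s, i ≠ j → ¬ p i ∣ p j) →
    ∀ t : α, (∀ i ∈ s, p i ∣ t) → (∏ i ∈ s, p i) ∣ t := by
  induction s using Finset.induction_on with
  | empty =>
      intro _ _ t _
      simpa using one_dvd t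
  | insert _ _ hx ih =>
      rename_i a s'
      intro hp hnd t ht
      rw [Finset.prod_insert hx]
      obtain ⟨c, hc⟩ := ht a (Finset.mem_insert_self a s')
      have hsub : (∏ i ∈ s', p i) ∣ c := by
        refine ih (fun i hi => hp i (Finset.mem_insert_of_mem hi))
          (fun i hi j hj hij => hnd i (Finset.mem_insert_of_mem hi) j
            (Finset.mem_insert_of_mem hj) hij) c (fun i hi => ?_)
        have hit : p i ∣ p a * c := by rw [← hc]; exact ht i (Finset.mem_insert_of_mem hi)
        rcases (hp i (Finset.mem_insert_of_mem hi)).2.2 _ _ hit with hd | hd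
        · exact absurd hd (hnd i (Finset.mem_insert_of_mem hi) a
            (Finset.mem_insert_self a s') (fun he => hx (he ▸ hi)))
        · exact hd
      obtain ⟨e, he⟩ := hsub
      exact ⟨e, by rw [hc, he, mul_assoc]⟩

/- ### Non-associateness of the linear primes -/

lemma X_sub_not_dvd [Nontrivial L] {a b c d : σ} [DecidableEq σ] (hab : a ≠ b) (hcd : c ≠ d)
    (h1 : ¬(c = a ∧ d = b)) (h2 : ¬(c = b ∧ d = a)) :
    ¬ ((X a : MvPowerSeries σ L) - X b) ∣ ((X c : MvPowerSeries σ L) - X d) := by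
  rintro ⟨h, hh⟩
  have key : ∀ e : σ, ((if e = c then (1:L) else 0) - (if e = d then 1 else 0)) =
      ((if e = a then constantCoeff (σ := σ) (R := L) h else 0) - (if e = b then constantCoeff (σ := σ) (R := L) h else 0)) := by
    intro e
    have hc := congrArg (coeff (R := L) (Finsupp.single e 1)) hh
    rw [map_sub, coeff_X, coeff_X, sub_mul, map_sub, coeff_X_mul', coeff_X_mul'] at hc
    have hLc : (if Finsupp.single e 1 = Finsupp.single c 1 then (1:L) else 0) =
        if e = c then 1 else 0 := if_congr (Finsupp.single_left_inj one_ne_zero) rfl rfl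
    have hLd : (if Finsupp.single e 1 = Finsupp.single d 1 then (1:L) else 0) =
        if e = d then 1 else 0 := if_congr (Finsupp.single_left_inj one_ne_zero) rfl rfl
    have hR : ∀ z : σ, (if 1 ≤ (Finsupp.single e 1) z
        then coeff (R := L) (Finsupp.single e 1 - Finsupp.single z 1) h else 0) =
        if e = z then constantCoeff (σ := σ) (R := L) h else 0 := by
      intro z
      by_cases hez : e = z
      · subst hez
        have hz : Finsupp.single e 1 - Finsupp.single e 1 = (0 : σ →₀ ℕ) := by
          ext t
          simp
        rw [if_pos (le_of_eq Finsupp.single_eq_same.symm), if_pos rfl, hz]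
        rfl
      · rw [if_neg hez, if_neg (by rw [Finsupp.single_eq_of_ne' hez]; omega)]
    rw [← hLc, ← hLd, hc, hR a, hR b]
  have hkc := key c
  have hkd := key d
  rw [if_pos rfl, if_neg hcd] at hkc
  rw [if_neg (fun hx => hcd hx.symm), if_pos rfl] at hkd
  by_cases hca : c = a
  · have hcb : ¬ c = b := fun hx => hab (hca ▸ hx : a = b)
    rw [if_pos hca, if_neg hcb, sub_zero] at hkc
    have hc0 : constantCoeff (σ := σ) (R := L) h = 1 := by linear_combination - hkc
    have hda : ¬ d = a := fun hx => hcd (hca.trans hx.symm)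
    rw [if_neg hda] at hkd
    by_cases hdb : d = b
    · exact h1 ⟨hca, hdb⟩
    · rw [if_neg hdb] at hkd
      simp at hkd
  · by_cases hcb : c = b
    · rw [if_neg hca, if_pos hcb, zero_sub] at hkc
      have hc0 : constantCoeff (σ := σ) (R := L) h = -1 := by linear_combination hkc
      have hdb : ¬ d = b := fun hx => hcd (hcb.trans hx.symm)
      rw [if_neg hdb, sub_zero] at hkd
      by_cases hda : d = a
      · exact h2 ⟨hcb, hda⟩
      · rw [if_neg hda] at hkd
        simp at hkd
    · rw [if_neg hca, if_neg hcb, sub_zero, sub_zero] at hkc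
      simp at hkc

/- ### Vandermonde sign -/

lemma hom_vandermonde_prod {A : Type} [CommRing A] (φ : A →+* A) {n : ℕ} (x : Fin n → A)
    (c : Equiv.Perm (Fin n)) (hφ : ∀ i, φ (x i) = x (c i)) :
    φ (∏ i : Fin n, ∏ j ∈ Finset.Ioi i, (x j - x i)) =
      ((Equiv.Perm.sign c : ℤ) : A) * ∏ i : Fin n, ∏ j ∈ Finset.Ioi i, (x j - x i) := by
  rw [← Matrix.det_vandermonde, RingHom.map_det]
  have hmm : φ.mapMatrix (Matrix.vandermonde x) = (Matrix.vandermonde x).submatrix c id := by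
    ext i j
    simp only [RingHom.mapMatrix_apply, Matrix.map_apply, Matrix.vandermonde_apply,
      Matrix.submatrix_apply, id_eq, map_pow, hφ]
  rw [hmm, Matrix.det_permute, Matrix.det_vandermonde]

/- ### Cosets of the subgroup fixing the first `r` letters -/

lemma card_perm_fix (n r : ℕ) :
    (Finset.univ.filter (fun w : Equiv.Perm (Fin n) =>
      ∀ i : Fin n, (i : ℕ) < r → w i = i)).card = (n - r).factorial := by
  classical
  have h1 : (Finset.univ.filter (fun w : Equiv.Perm (Fin n) =>
      ∀ i : Fin n, (i : ℕ) < r → w i = i)).card =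
      Fintype.card {w : Equiv.Perm (Fin n) // ∀ i : Fin n, ¬ r ≤ (i : ℕ) → w i = i} := by
    rw [Fintype.card_subtype]
    congr 1
    apply Finset.filter_congr
    intro w _
    constructor
    · intro hw i hi
      exact hw i (by omega)
    · intro hw i hi
      exact hw i (by omega)
  rw [h1]
  have e1 : {w : Equiv.Perm (Fin n) // ∀ i : Fin n, ¬ r ≤ (i : ℕ) → w i = i} ≃
      Equiv.Perm {i : Fin n // r ≤ (i : ℕ)} :=
    (Equiv.Perm.subtypeEquivSubtypePerm (fun i : Fin n => r ≤ (i : ℕ))).symm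
  rw [Fintype.card_congr e1, Fintype.card_perm]
  congr 1
  have e2 : {i : Fin n // r ≤ (i : ℕ)} ≃ Fin (n - r) := by
    refine ⟨fun i => ⟨(i : Fin n).val - r, by omega⟩,
      fun j => ⟨⟨r + j.val, by omega⟩, by simp⟩, ?_, ?_⟩
    · rintro ⟨i, hi⟩
      ext
      simp only
      omega
    · rintro ⟨j, hj⟩
      ext
      simp only
      omega
  rw [Fintype.card_congr e2, Fintype.card_fin]

lemma sum_perm_coset_factor {M : Type} [CommRing M] (n r : ℕ)
    (C : Equiv.Perm (Fin n) → M)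
    (hC : ∀ w v : Equiv.Perm (Fin n), (∀ i : Fin n, (i : ℕ) < r → v i = i) →
      C (w * v) = C w) :
    ∃ t : M, ∑ w : Equiv.Perm (Fin n), C w = ((n - r).factorial : M) * t := by
  classical
  set res : Equiv.Perm (Fin n) → (Fin n → Fin n) :=
    fun w => fun i => if (i : ℕ) < r then w i else i with hres
  have hres_eq : ∀ w w' : Equiv.Perm (Fin n), res w = res w' ↔
      (∀ i : Fin n, (i : ℕ) < r → w i = w' i) := by
    intro w w'
    constructor
    · intro h i hi
      have h2 := congrFun h i
      rw [hres] at h2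
      simpa [hi] using h2
    · intro h
      funext i
      rw [hres]
      simp only
      split_ifs with hi
      · exact h i hi
      · rfl
  have hCeq : ∀ w w' : Equiv.Perm (Fin n), res w = res w' → C w = C w' := by
    intro w w' h
    have h' := (hres_eq w w').mp h
    have hv : ∀ i : Fin n, (i : ℕ) < r → (w⁻¹ * w') i = i := by
      intro i hi
      have : w' i = w i := (h' i hi).symm
      show w⁻¹ (w' i) = i
      rw [this]
      exact w.symm_apply_apply i
    have : C (w * (w⁻¹ * w')) = C w := hC w _ hv
    rw [← mul_assoc, mul_inv_cancel, one_mul] at this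
    exact this.symm
  have hmaps : ∀ w ∈ (Finset.univ : Finset (Equiv.Perm (Fin n))),
      res w ∈ Finset.univ.image res := fun w hw => Finset.mem_image_of_mem res hw
  rw [← Finset.sum_fiberwise_of_maps_to hmaps C]
  set pick : (Fin n → Fin n) → Equiv.Perm (Fin n) :=
    fun y => if h : ∃ w, res w = y then h.choose else 1 with hpick
  refine ⟨∑ y ∈ Finset.univ.image res, C (pick y), ?_⟩
  rw [Finset.mul_sum]
  refine Finset.sum_congr rfl fun y hy => ?_
  obtain ⟨w0, _, hw0⟩ := Finset.mem_image.mp hy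
  have hex : ∃ w, res w = y := ⟨w0, hw0⟩
  have hpicky : res (pick y) = y := by
    rw [hpick]
    simp only [dif_pos hex]
    exact hex.choose_spec
  have hfib : ∀ w ∈ Finset.univ.filter (fun w => res w = y), C w = C (pick y) := by
    intro w hw
    have hw' : res w = y := (Finset.mem_filter.mp hw).2
    exact hCeq w (pick y) (by rw [hw', hpicky])
  rw [Finset.sum_congr rfl hfib, Finset.sum_const]
  have hcard : (Finset.univ.filter (fun w => res w = y)).card = (n - r).factorial := by
    rw [← card_perm_fix n r]
    refine (Finset.card_bij (fun v _ => pick y * v) ?_ ?_ ?_).symm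
    · intro v hv
      have hvfix := (Finset.mem_filter.mp hv).2
      refine Finset.mem_filter.mpr ⟨Finset.mem_univ _, ?_⟩
      rw [(hres_eq _ _).mpr, hpicky]
      intro i hi
      show pick y (v i) = pick y i
      rw [hvfix i hi]
    · intro v1 hv1 v2 hv2 h
      exact mul_left_cancel h
    · intro w hw
      have hw' : res w = y := (Finset.mem_filter.mp hw).2
      refine ⟨(pick y)⁻¹ * w, Finset.mem_filter.mpr ⟨Finset.mem_univ _, ?_⟩, ?_⟩
      · intro i hi
        show (pick y)⁻¹ (w i) = i
        have : w i = pick y i := by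
          have := (hres_eq w (pick y)).mp (by rw [hw', hpicky])
          exact this i hi
        rw [this]
        exact (pick y).symm_apply_apply i
      · show pick y * ((pick y)⁻¹ * w) = w
        rw [← mul_assoc, mul_inv_cancel, one_mul]
  rw [hcard, nsmul_eq_mul]

/- ### Specific setup over `Fin n ⊕ ℕ` -/

section Engine

variable [IsDomain L]

lemma sigma_eq_iff {γ β : Type} {a a' : γ} {b b' : β} :
    (⟨a, b⟩ : Σ _ : γ, β) = ⟨a', b'⟩ ↔ a = a' ∧ b = b' := by
  constructor
  · intro h
    injection h with h1 h2
    exact ⟨h1, h2⟩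
  · rintro ⟨h1, h2⟩
    exact sigma_mk_eq h1 h2

/-- `X u +_F \bar X v` is a unit times `X u - X v`. -/
lemma fadd_neg_unit (G : FGL L) (u v : σ) :
    ∃ U : MvPowerSeries σ L, IsUnit U ∧
      fadd G.a (X u) (G.neg (X v)) = U * ((X u : MvPowerSeries σ L) - X v) := by
  obtain ⟨U, hU1, hU2⟩ := fadd_neg_eq G u v
  refine ⟨U, ?_, by rw [hU2, mul_comm]⟩
  rw [isUnit_iff_constantCoeff, hU1]
  exact isUnit_one

variable {n r : ℕ} (G : FGL L)

/-- the denominator product -/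
def Bden (G : FGL L) (n r : ℕ) (w : Equiv.Perm (Fin n)) : MvPowerSeries (Fin n ⊕ ℕ) L :=
  ∏ i ∈ Finset.univ.filter (fun i : Fin n => (i : ℕ) < r), ∏ j ∈ Finset.Ioi i,
    fadd G.a (X (Sum.inl (w i))) (G.neg (X (Sum.inl (w j))))

/-- the Vandermonde product -/
def Vdm (n : ℕ) : MvPowerSeries (Fin n ⊕ ℕ) L :=
  ∏ i : Fin n, ∏ j ∈ Finset.Ioi i, ((X (Sum.inl j) : MvPowerSeries (Fin n ⊕ ℕ) L) - X (Sum.inl i))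

lemma Bden_factor (w : Equiv.Perm (Fin n)) :
    ∃ (U : MvPowerSeries (Fin n ⊕ ℕ) L) (T : Finset (Σ _ : Fin n, Fin n)),
      IsUnit U ∧ T ⊆ (Finset.univ.sigma fun i => Finset.Ioi i) ∧
      Bden G n r w =
        U * ∏ q ∈ T, ((X (Sum.inl q.2) : MvPowerSeries (Fin n ⊕ ℕ) L) - X (Sum.inl q.1)) := by
  classical
  set rP : Finset (Σ _ : Fin n, Fin n) :=
    (Finset.univ.filter (fun i : Fin n => (i : ℕ) < r)).sigma (fun i => Finset.Ioi i) with hrP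
  have hB : Bden G n r w = ∏ q ∈ rP,
      fadd G.a (X (Sum.inl (w q.1))) (G.neg (X (Sum.inl (w q.2)))) := by
    rw [Bden, Finset.prod_sigma']
  choose Ufun hUunit hUeq using fun q : Σ _ : Fin n, Fin n =>
    fadd_neg_unit G (Sum.inl (w q.1) : Fin n ⊕ ℕ) (Sum.inl (w q.2))
  set ow : (Σ _ : Fin n, Fin n) → (Σ _ : Fin n, Fin n) :=
    fun q => if w q.1 < w q.2 then ⟨w q.1, w q.2⟩ else ⟨w q.2, w q.1⟩ with how
  set sgn : (Σ _ : Fin n, Fin n) → MvPowerSeries (Fin n ⊕ ℕ) L :=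
    fun q => if w q.1 < w q.2 then -1 else 1 with hsgn
  have hfactor : ∀ q : Σ _ : Fin n, Fin n,
      ((X (Sum.inl (w q.1)) : MvPowerSeries (Fin n ⊕ ℕ) L) - X (Sum.inl (w q.2))) =
        sgn q * ((X (Sum.inl ((ow q).2)) : MvPowerSeries (Fin n ⊕ ℕ) L) - X (Sum.inl ((ow q).1))) := by
    intro q
    rw [hsgn, how]
    simp only
    split_ifs with hlt
    · ring
    · ring
  have hsgn_unit : ∀ q, IsUnit (sgn q) := by
    intro q
    rw [hsgn]
    simp only
    split_ifs
    · exact isUnit_one.neg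
    · exact isUnit_one
  have howmem : ∀ q ∈ rP, ow q ∈ Finset.univ.sigma (fun i : Fin n => Finset.Ioi i) := by
    intro q hq
    rw [hrP] at hq
    rw [Finset.mem_sigma] at hq ⊢
    obtain ⟨hq1, hq2⟩ := hq
    rw [Finset.mem_Ioi] at hq2
    have hne : w q.1 ≠ w q.2 := fun hc => absurd (w.injective hc) (ne_of_lt hq2)
    refine ⟨Finset.mem_univ _, ?_⟩
    rw [how]
    simp only
    split_ifs with hlt
    · rw [Finset.mem_Ioi]; exact hlt
    · rw [Finset.mem_Ioi]
      rcases lt_or_gt_of_ne hne with h | h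
      · exact absurd h hlt
      · exact h
  have howinj : ∀ q ∈ rP, ∀ q' ∈ rP, ow q = ow q' → q = q' := by
    intro q hq q' hq' heq
    rw [hrP, Finset.mem_sigma, Finset.mem_Ioi] at hq hq'
    have h2 := hq.2
    have h2' := hq'.2
    rw [how] at heq
    simp only at heq
    split_ifs at heq with ha hb hb
    · rw [sigma_eq_iff] at heq
      obtain ⟨e1, e2⟩ := heq
      have g1 := w.injective e1
      have g2 := w.injective e2
      rcases q with ⟨q1, q2⟩
      rcases q' with ⟨q1', q2'⟩
      simp only at g1 g2
      exact sigma_mk_eq g1 g2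
    · rw [sigma_eq_iff] at heq
      obtain ⟨e1, e2⟩ := heq
      have g1 := w.injective e1
      have g2 := w.injective e2
      rcases q with ⟨q1, q2⟩
      rcases q' with ⟨q1', q2'⟩
      simp only at g1 g2 h2 h2'
      have n1 : (q1 : ℕ) < (q2 : ℕ) := h2
      have n2 : (q1' : ℕ) < (q2' : ℕ) := h2'
      have n3 : (q1 : ℕ) = (q2' : ℕ) := congrArg Fin.val g1
      have n4 : (q2 : ℕ) = (q1' : ℕ) := congrArg Fin.val g2
      omega
    · rw [sigma_eq_iff] at heq
      obtain ⟨e1, e2⟩ := heq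
      have g1 := w.injective e1
      have g2 := w.injective e2
      rcases q with ⟨q1, q2⟩
      rcases q' with ⟨q1', q2'⟩
      simp only at g1 g2 h2 h2'
      have n1 : (q1 : ℕ) < (q2 : ℕ) := h2
      have n2 : (q1' : ℕ) < (q2' : ℕ) := h2'
      have n3 : (q1 : ℕ) = (q2' : ℕ) := congrArg Fin.val g2
      have n4 : (q2 : ℕ) = (q1' : ℕ) := congrArg Fin.val g1
      omega
    · rw [sigma_eq_iff] at heq
      obtain ⟨e1, e2⟩ := heq
      have g1 := w.injective e2
      have g2 := w.injective e1
      rcases q with ⟨q1, q2⟩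
      rcases q' with ⟨q1', q2'⟩
      simp only at g1 g2
      exact sigma_mk_eq g1 g2
  refine ⟨(∏ q ∈ rP, Ufun q) * (∏ q ∈ rP, sgn q), rP.image ow, ?_, ?_, ?_⟩
  · refine IsUnit.mul ?_ ?_ <;>
      exact Finset.prod_induction _ IsUnit (fun _ _ => IsUnit.mul) isUnit_one
        (fun q _ => by first | exact hUunit q | exact hsgn_unit q)
  · intro p hp
    obtain ⟨q, hq, hqp⟩ := Finset.mem_image.mp hp
    exact hqp ▸ howmem q hq
  · rw [hB]
    have h1 : ∀ q ∈ rP, fadd G.a (X (Sum.inl (w q.1))) (G.neg (X (Sum.inl (w q.2)))) =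
        Ufun q * (sgn q * ((X (Sum.inl ((ow q).2)) : MvPowerSeries (Fin n ⊕ ℕ) L) -
          X (Sum.inl ((ow q).1)))) := by
      intro q _
      rw [hUeq q, hfactor q]
    rw [Finset.prod_congr rfl h1]
    rw [Finset.prod_mul_distrib, Finset.prod_mul_distrib]
    rw [Finset.prod_image howinj]
    ring

lemma Bden_ne_zero (w : Equiv.Perm (Fin n)) : Bden G n r w ≠ 0 := by
  obtain ⟨U, T, hU, hT, heq⟩ := Bden_factor (r := r) G w
  rw [heq]
  refine mul_ne_zero (hU.ne_zero) ?_
  refine Finset.prod_ne_zero_iff.mpr fun q hq => ?_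
  have hmem := hT hq
  rw [Finset.mem_sigma, Finset.mem_Ioi] at hmem
  refine X_sub_ne_zero ?_
  intro hc
  injection hc with hc'
  exact absurd hc' (ne_of_gt hmem.2)

lemma Vdm_ne_zero : (Vdm n : MvPowerSeries (Fin n ⊕ ℕ) L) ≠ 0 := by
  refine Finset.prod_ne_zero_iff.mpr fun i _ => ?_
  refine Finset.prod_ne_zero_iff.mpr fun j hj => ?_
  rw [Finset.mem_Ioi] at hj
  refine X_sub_ne_zero ?_
  intro hc
  injection hc with hc'
  exact absurd hc' (ne_of_gt hj)

/-- reindexing a product over `Ioi i` by a permutation fixing `[0,r)` -/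
lemma prod_Ioi_reindex {M : Type} [CommMonoid M] (v : Equiv.Perm (Fin n))
    (hv : ∀ i : Fin n, (i : ℕ) < r → v i = i) (i : Fin n) (hi : (i : ℕ) < r)
    (f : Fin n → M) : ∏ j ∈ Finset.Ioi i, f (v j) = ∏ j ∈ Finset.Ioi i, f j := by
  have hv' : ∀ j : Fin n, ¬ ((v j : ℕ) < r) → ¬ ((j : ℕ) < r) := by
    intro j hj hcj
    exact hj (by rw [hv j hcj]; exact hcj)
  have hmaps : ∀ (u : Equiv.Perm (Fin n)), (∀ k : Fin n, (k : ℕ) < r → u k = k) →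
      ∀ j ∈ Finset.Ioi i, u j ∈ Finset.Ioi i := by
    intro u hu j hj
    rw [Finset.mem_Ioi] at hj ⊢
    by_cases hjr : (j : ℕ) < r
    · rw [hu j hjr]; exact hj
    · have hur : ¬ ((u j : ℕ) < r) := by
        intro hc
        have := hu (u j) hc
        have := u.injective this
        rw [this] at hc
        exact hjr hc
      have h1 : (i : ℕ) < (u j : ℕ) := by omega
      exact Fin.lt_def.mpr h1
  have hvinv : ∀ k : Fin n, (k : ℕ) < r → v⁻¹ k = k := by
    intro k hk
    have := hv k hk
    conv_lhs => rw [← this]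
    exact v.symm_apply_apply k
  refine Finset.prod_nbij' (fun j => v j) (fun j => v⁻¹ j)
    (hmaps v hv) (hmaps v⁻¹ hvinv) ?_ ?_ ?_
  · intro j _
    exact v.symm_apply_apply j
  · intro j _
    exact v.apply_symm_apply j
  · intro j _
    rfl

lemma Bden_invariant (w v : Equiv.Perm (Fin n))
    (hv : ∀ i : Fin n, (i : ℕ) < r → v i = i) :
    Bden G n r (w * v) = Bden G n r w := by
  unfold Bden
  refine Finset.prod_congr rfl fun i hi => ?_
  rw [Finset.mem_filter] at hi
  have hir := hi.2
  have hwi : (w * v) i = w i := by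
    rw [Equiv.Perm.mul_apply, hv i hir]
  calc ∏ j ∈ Finset.Ioi i, fadd G.a (X (Sum.inl ((w * v) i)))
        (G.neg (X (Sum.inl ((w * v) j))))
      = ∏ j ∈ Finset.Ioi i, fadd G.a (X (Sum.inl (w i))) (G.neg (X (Sum.inl (w (v j))))) := by
        refine Finset.prod_congr rfl fun j _ => ?_
        rw [hwi]
        rfl
    _ = ∏ j ∈ Finset.Ioi i, fadd G.a (X (Sum.inl (w i))) (G.neg (X (Sum.inl (w j)))) :=
        prod_Ioi_reindex (M := MvPowerSeries (Fin n ⊕ ℕ) L) (r := r) v hv i hir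
          (fun j => fadd G.a (X (Sum.inl (w i))) (G.neg (X (Sum.inl (w j)))))

lemma Bden_rename (a b : Fin n) (w : Equiv.Perm (Fin n)) :
    prename (Equiv.sumCongr (Equiv.swap a b) (Equiv.refl ℕ)) (Bden G n r w) =
      Bden G n r (Equiv.swap a b * w) := by
  unfold Bden
  rw [map_prod]
  refine Finset.prod_congr rfl fun i _ => ?_
  rw [map_prod]
  refine Finset.prod_congr rfl fun j _ => ?_
  rw [prename_fadd, prename_neg, prename_X, prename_X]
  rfl

lemma Vdm_rename (a b : Fin n) (hab : a ≠ b) :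
    prename (Equiv.sumCongr (Equiv.swap a b) (Equiv.refl ℕ)) (Vdm n : MvPowerSeries (Fin n ⊕ ℕ) L) =
      - Vdm n := by
  have h := hom_vandermonde_prod
    (prename (Equiv.sumCongr (Equiv.swap a b) (Equiv.refl ℕ)) :
      MvPowerSeries (Fin n ⊕ ℕ) L →+* MvPowerSeries (Fin n ⊕ ℕ) L)
    (fun i : Fin n => (X (Sum.inl i) : MvPowerSeries (Fin n ⊕ ℕ) L))
    (Equiv.swap a b) (fun i => by rw [prename_X]; rfl)
  rw [Vdm]
  rw [h, Equiv.Perm.sign_swap hab]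
  push_cast
  ring

end Engine

section Antisym

variable [IsDomain L]

lemma swap_emap_set2 {n : ℕ} (a b : Fin n) (hab : a ≠ b) (D : (Fin n ⊕ ℕ) →₀ ℕ) (p q : ℕ) :
    Finsupp.equivMapDomain (Equiv.sumCongr (Equiv.swap a b) (Equiv.refl ℕ)).symm
        (set2 (Sum.inl a) (Sum.inl b) D p q) =
      set2 (Sum.inl a : Fin n ⊕ ℕ) (Sum.inl b) D q p := by
  classical
  have huv : (Sum.inl a : Fin n ⊕ ℕ) ≠ Sum.inl b := fun hc => hab (Sum.inl.inj hc)
  set e := Equiv.sumCongr (Equiv.swap a b) (Equiv.refl ℕ) with he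
  ext s
  have happ : (Finsupp.equivMapDomain e.symm (set2 (Sum.inl a) (Sum.inl b) D p q)) s =
      (set2 (Sum.inl a : Fin n ⊕ ℕ) (Sum.inl b) D p q) (e s) := by
    rw [Finsupp.equivMapDomain_apply, Equiv.symm_symm]
  rw [happ, set2_apply huv, set2_apply huv]
  rcases s with c | m
  · by_cases hca : c = a
    · subst hca
      have h1 : e (Sum.inl c) = Sum.inl b := by
        rw [he]
        show Sum.inl ((Equiv.swap c b) c) = Sum.inl b
        rw [Equiv.swap_apply_left]
      rw [h1]
      rw [if_neg (Ne.symm huv), if_pos rfl, if_pos rfl]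
    · by_cases hcb : c = b
      · subst hcb
        have h1 : e (Sum.inl c) = Sum.inl a := by
          rw [he]
          show Sum.inl ((Equiv.swap a c) c) = Sum.inl a
          rw [Equiv.swap_apply_right]
        rw [h1]
        rw [if_pos rfl, if_neg (fun hc => hca (Sum.inl.inj hc)), if_pos rfl]
      · have h1 : e (Sum.inl c) = Sum.inl c := by
          rw [he]
          show Sum.inl ((Equiv.swap a b) c) = Sum.inl c
          rw [Equiv.swap_apply_of_ne_of_ne hca hcb]
        rw [h1]
        rw [if_neg (fun hc => hca (Sum.inl.inj hc)), if_neg (fun hc => hcb (Sum.inl.inj hc)),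
          if_neg (fun hc => hca (Sum.inl.inj hc)), if_neg (fun hc => hcb (Sum.inl.inj hc))]
  · have h1 : e (Sum.inr m) = Sum.inr m := by rw [he]; rfl
    rw [h1]
    rw [if_neg (fun hc => nomatch hc), if_neg (fun hc => nomatch hc),
      if_neg (fun hc => nomatch hc), if_neg (fun hc => nomatch hc)]

lemma pim_eq_zero_of_antisym [CharZero L] {n : ℕ} (a b : Fin n) (hab : a ≠ b)
    (t : MvPowerSeries (Fin n ⊕ ℕ) L)
    (h : prename (Equiv.sumCongr (Equiv.swap a b) (Equiv.refl ℕ)) t = - t) :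
    pim (Sum.inl a) (Sum.inl b) t = 0 := by
  classical
  have huv : (Sum.inl a : Fin n ⊕ ℕ) ≠ Sum.inl b := fun hc => hab (Sum.inl.inj hc)
  set u : Fin n ⊕ ℕ := Sum.inl a with hu
  set v : Fin n ⊕ ℕ := Sum.inl b with hv'
  funext d
  show pim u v t d = (0 : L)
  unfold pim
  split_ifs with hdv
  swap
  · rfl
  have hcoeff : ∀ D : (Fin n ⊕ ℕ) →₀ ℕ,
      coeff (R := L) (Finsupp.equivMapDomain
        (Equiv.sumCongr (Equiv.swap a b) (Equiv.refl ℕ)).symm D) t = - coeff (R := L) D t := by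
    intro D
    have hc := congrArg (coeff (R := L) D) h
    rw [map_neg] at hc
    rw [← prename_apply]
    exact hc
  have hterm : ∀ j, j ≤ d u →
      coeff (R := L) (set2 u v d (d u - j) j) t = - coeff (R := L) (set2 u v d j (d u - j)) t := by
    intro j hj
    have := hcoeff (set2 u v d j (d u - j))
    rw [hu, hv', swap_emap_set2 a b hab] at this
    rw [← hu, ← hv'] at this
    exact this
  have hS : ∑ j ∈ Finset.range (d u + 1), t (set2 u v d (d u - j) j) =
      - ∑ j ∈ Finset.range (d u + 1), t (set2 u v d j (d u - j)) := by
    rw [← Finset.sum_neg_distrib]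
    refine Finset.sum_congr rfl fun j hj => ?_
    simp only [Finset.mem_range] at hj
    exact hterm j (by omega)
  have hrefl : ∑ j ∈ Finset.range (d u + 1), t (set2 u v d j (d u - j)) =
      ∑ j ∈ Finset.range (d u + 1), t (set2 u v d (d u - j) j) := by
    rw [← Finset.sum_range_reflect (fun j => t (set2 u v d j (d u - j))) (d u + 1)]
    refine Finset.sum_congr rfl fun j hj => ?_
    simp only [Finset.mem_range] at hj
    have e1 : d u + 1 - 1 - j = d u - j := by omega
    have e2 : d u - (d u - j) = j := by omega
    rw [e1, e2]
  set S := ∑ j ∈ Finset.range (d u + 1), t (set2 u v d (d u - j) j) with hSdef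
  have hfin : S = - S := by
    calc S = - ∑ j ∈ Finset.range (d u + 1), t (set2 u v d j (d u - j)) := hS
    _ = - S := by rw [hrefl]
  have h2 : (2 : L) * S = 0 := by linear_combination hfin
  have h2ne : (2 : L) ≠ 0 := by
    have : ((2 : ℕ) : L) ≠ 0 := Nat.cast_ne_zero.mpr (by norm_num)
    simpa using this
  exact (mul_eq_zero.mp h2).resolve_left h2ne

lemma Vdm_dvd_of_antisym [CharZero L] {n : ℕ} (t : MvPowerSeries (Fin n ⊕ ℕ) L)
    (hanti : ∀ a b : Fin n, a ≠ b →
      prename (Equiv.sumCongr (Equiv.swap a b) (Equiv.refl ℕ)) t = - t) :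
    (Vdm n : MvPowerSeries (Fin n ⊕ ℕ) L) ∣ t := by
  classical
  rw [Vdm, Finset.prod_sigma']
  refine prod_primes_dvd_of_dvd _ _ ?_ ?_ t ?_
  · intro q hq
    rw [Finset.mem_sigma, Finset.mem_Ioi] at hq
    exact prime_X_sub (fun hc => absurd (Sum.inl.inj hc) (ne_of_gt hq.2))
  · intro q hq q' hq' hne
    rw [Finset.mem_sigma, Finset.mem_Ioi] at hq hq'
    refine X_sub_not_dvd (fun hc => absurd (Sum.inl.inj hc) (ne_of_gt hq.2))
      (fun hc => absurd (Sum.inl.inj hc) (ne_of_gt hq'.2)) ?_ ?_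
    · rintro ⟨hc1, hc2⟩
      apply hne
      have g1 := Sum.inl.inj hc2
      have g2 := Sum.inl.inj hc1
      rcases q with ⟨q1, q2⟩
      rcases q' with ⟨q1', q2'⟩
      simp only at g1 g2
      exact sigma_mk_eq g1.symm g2.symm
    · rintro ⟨hc1, hc2⟩
      have g1 := Sum.inl.inj hc1
      have g2 := Sum.inl.inj hc2
      rcases q with ⟨q1, q2⟩
      rcases q' with ⟨q1', q2'⟩
      simp only at g1 g2
      have n1 : (q1 : ℕ) < (q2 : ℕ) := hq.2
      have n2 : (q1' : ℕ) < (q2' : ℕ) := hq'.2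
      have n3 : (q2' : ℕ) = (q1 : ℕ) := congrArg Fin.val g1
      have n4 : (q1' : ℕ) = (q2 : ℕ) := congrArg Fin.val g2
      omega
  · intro q hq
    rw [Finset.mem_sigma, Finset.mem_Ioi] at hq
    have hab : q.2 ≠ q.1 := ne_of_gt hq.2
    exact dvd_of_pim_eq_zero (fun hc => hab (Sum.inl.inj hc))
      (pim_eq_zero_of_antisym q.2 q.1 hab t (hanti q.2 q.1 hab))

end Antisym

section MainEngine

variable [IsDomain L] [CharZero L]

lemma main_engine (G : FGL L) (n r : ℕ)
    (A : Equiv.Perm (Fin n) → MvPowerSeries (Fin n ⊕ ℕ) L)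
    (hA1 : ∀ w v : Equiv.Perm (Fin n), (∀ i : Fin n, (i : ℕ) < r → v i = i) → A (w * v) = A w)
    (hA2 : ∀ a b : Fin n, a ≠ b → ∀ w,
      prename (Equiv.sumCongr (Equiv.swap a b) (Equiv.refl ℕ)) (A w) =
        A (Equiv.swap a b * w)) :
    ∃ g : MvPowerSeries (Fin n ⊕ ℕ) L,
      (((n - r).factorial : FractionRing (MvPowerSeries (Fin n ⊕ ℕ) L)))⁻¹ *
        ∑ w : Equiv.Perm (Fin n),
          algebraMap (MvPowerSeries (Fin n ⊕ ℕ) L)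
              (FractionRing (MvPowerSeries (Fin n ⊕ ℕ) L)) (A w) /
          algebraMap (MvPowerSeries (Fin n ⊕ ℕ) L)
              (FractionRing (MvPowerSeries (Fin n ⊕ ℕ) L)) (Bden G n r w) =
        algebraMap (MvPowerSeries (Fin n ⊕ ℕ) L)
          (FractionRing (MvPowerSeries (Fin n ⊕ ℕ) L)) g := by
  classical
  have hkey : ∀ w, ∃ C : MvPowerSeries (Fin n ⊕ ℕ) L,
      Bden G n r w * C = A w * Vdm n := by
    intro w
    obtain ⟨U, T, hU, hT, heq⟩ := Bden_factor (r := r) G w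
    obtain ⟨Uinv, hUinv⟩ := hU.exists_right_inv
    refine ⟨Uinv * A w * ∏ q ∈ (Finset.univ.sigma fun i : Fin n => Finset.Ioi i) \ T,
      ((X (Sum.inl q.2) : MvPowerSeries (Fin n ⊕ ℕ) L) - X (Sum.inl q.1)), ?_⟩
    have hV : (Vdm n : MvPowerSeries (Fin n ⊕ ℕ) L) =
        (∏ q ∈ (Finset.univ.sigma fun i : Fin n => Finset.Ioi i) \ T,
          ((X (Sum.inl q.2) : MvPowerSeries (Fin n ⊕ ℕ) L) - X (Sum.inl q.1))) *
        ∏ q ∈ T, ((X (Sum.inl q.2) : MvPowerSeries (Fin n ⊕ ℕ) L) - X (Sum.inl q.1)) := by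
      rw [Vdm, Finset.prod_sigma', ← Finset.prod_sdiff hT]
    rw [heq, hV]
    calc U * (∏ q ∈ T, ((X (Sum.inl q.2) : MvPowerSeries (Fin n ⊕ ℕ) L) - X (Sum.inl q.1))) *
          (Uinv * A w * ∏ q ∈ (Finset.univ.sigma fun i : Fin n => Finset.Ioi i) \ T,
            ((X (Sum.inl q.2) : MvPowerSeries (Fin n ⊕ ℕ) L) - X (Sum.inl q.1)))
        = (U * Uinv) * (A w *
            ((∏ q ∈ (Finset.univ.sigma fun i : Fin n => Finset.Ioi i) \ T,
              ((X (Sum.inl q.2) : MvPowerSeries (Fin n ⊕ ℕ) L) - X (Sum.inl q.1))) *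
            ∏ q ∈ T, ((X (Sum.inl q.2) : MvPowerSeries (Fin n ⊕ ℕ) L) - X (Sum.inl q.1)))) := by
          ring
      _ = A w * _ := by rw [hUinv, one_mul]
  choose C hC using hkey
  have hBne : ∀ w, Bden G n r w ≠ 0 := Bden_ne_zero G
  have hVne : (Vdm n : MvPowerSeries (Fin n ⊕ ℕ) L) ≠ 0 := Vdm_ne_zero
  have hfact_ne : (((n - r).factorial : ℕ) : MvPowerSeries (Fin n ⊕ ℕ) L) ≠ 0 := by
    intro hc
    have h2 := congrArg (constantCoeff (σ := Fin n ⊕ ℕ) (R := L)) hc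
    rw [map_natCast, map_zero] at h2
    exact Nat.cast_ne_zero.mpr (Nat.factorial_ne_zero _) h2
  have hC1 : ∀ w v : Equiv.Perm (Fin n), (∀ i : Fin n, (i : ℕ) < r → v i = i) →
      C (w * v) = C w := by
    intro w v hv
    have h1 : Bden G n r w * C (w * v) = Bden G n r w * C w := by
      conv_lhs => rw [← Bden_invariant G w v hv]
      rw [hC (w * v), hA1 w v hv, ← hC w]
    exact mul_left_cancel₀ (hBne w) h1
  obtain ⟨t, hst⟩ := sum_perm_coset_factor n r C hC1
  have hanti : ∀ a b : Fin n, a ≠ b →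
      prename (Equiv.sumCongr (Equiv.swap a b) (Equiv.refl ℕ)) t = - t := by
    intro a b hab
    set φ := (prename (Equiv.sumCongr (Equiv.swap a b) (Equiv.refl ℕ)) :
      MvPowerSeries (Fin n ⊕ ℕ) L →+* MvPowerSeries (Fin n ⊕ ℕ) L) with hφ
    have hCsw : ∀ w, φ (C w) = - C (Equiv.swap a b * w) := by
      intro w
      have h1 : Bden G n r (Equiv.swap a b * w) * φ (C w) =
          Bden G n r (Equiv.swap a b * w) * (- C (Equiv.swap a b * w)) := by
        calc Bden G n r (Equiv.swap a b * w) * φ (C w)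
            = φ (Bden G n r w) * φ (C w) := by rw [Bden_rename]
          _ = φ (Bden G n r w * C w) := (map_mul φ _ _).symm
          _ = φ (A w * Vdm n) := by rw [hC w]
          _ = A (Equiv.swap a b * w) * (- Vdm n) := by
              rw [map_mul, hA2 a b hab w, Vdm_rename a b hab]
          _ = -(A (Equiv.swap a b * w) * Vdm n) := by ring
          _ = -(Bden G n r (Equiv.swap a b * w) * C (Equiv.swap a b * w)) := by rw [hC]
          _ = Bden G n r (Equiv.swap a b * w) * (- C (Equiv.swap a b * w)) := by ring
      exact mul_left_cancel₀ (hBne _) h1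
    have hsum : φ (∑ w : Equiv.Perm (Fin n), C w) = - ∑ w : Equiv.Perm (Fin n), C w := by
      rw [map_sum]
      calc ∑ w : Equiv.Perm (Fin n), φ (C w)
          = ∑ w : Equiv.Perm (Fin n), - C (Equiv.swap a b * w) :=
            Finset.sum_congr rfl fun w _ => hCsw w
        _ = - ∑ w : Equiv.Perm (Fin n), C (Equiv.swap a b * w) := by
            rw [Finset.sum_neg_distrib]
        _ = - ∑ w : Equiv.Perm (Fin n), C w := by
            congr 1
            exact Fintype.sum_bijective (fun w => Equiv.swap a b * w)
              (Group.mulLeft_bijective _) _ _ (fun w => rfl)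
    rw [hst] at hsum
    rw [map_mul, map_natCast] at hsum
    have h0 : (((n - r).factorial : ℕ) : MvPowerSeries (Fin n ⊕ ℕ) L) * (φ t + t) = 0 := by
      linear_combination hsum
    have h1 := (mul_eq_zero.mp h0).resolve_left hfact_ne
    linear_combination h1
  obtain ⟨g, hg⟩ := Vdm_dvd_of_antisym t hanti
  refine ⟨g, ?_⟩
  have halg_inj : Function.Injective (algebraMap (MvPowerSeries (Fin n ⊕ ℕ) L)
      (FractionRing (MvPowerSeries (Fin n ⊕ ℕ) L))) :=
    IsFractionRing.injective _ _
  have halgne : ∀ z : MvPowerSeries (Fin n ⊕ ℕ) L, z ≠ 0 →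
      algebraMap (MvPowerSeries (Fin n ⊕ ℕ) L)
        (FractionRing (MvPowerSeries (Fin n ⊕ ℕ) L)) z ≠ 0 := by
    intro z hz hc
    exact hz (halg_inj (by rw [hc, map_zero]))
  have hdivw : ∀ w : Equiv.Perm (Fin n),
      algebraMap (MvPowerSeries (Fin n ⊕ ℕ) L)
          (FractionRing (MvPowerSeries (Fin n ⊕ ℕ) L)) (A w) /
        algebraMap (MvPowerSeries (Fin n ⊕ ℕ) L)
          (FractionRing (MvPowerSeries (Fin n ⊕ ℕ) L)) (Bden G n r w) =
      algebraMap (MvPowerSeries (Fin n ⊕ ℕ) L)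
          (FractionRing (MvPowerSeries (Fin n ⊕ ℕ) L)) (C w) /
        algebraMap (MvPowerSeries (Fin n ⊕ ℕ) L)
          (FractionRing (MvPowerSeries (Fin n ⊕ ℕ) L)) (Vdm n) := by
    intro w
    rw [div_eq_div_iff (halgne _ (hBne w)) (halgne _ hVne), ← map_mul, ← map_mul]
    congr 1
    linear_combination - hC w
  rw [Finset.sum_congr rfl (fun w _ => hdivw w), ← Finset.sum_div, ← map_sum, hst, hg]
  rw [map_mul, map_natCast, map_mul]
  have h1 : (((n - r).factorial : ℕ) : FractionRing (MvPowerSeries (Fin n ⊕ ℕ) L)) ≠ 0 := by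
    rw [← map_natCast (algebraMap (MvPowerSeries (Fin n ⊕ ℕ) L)
      (FractionRing (MvPowerSeries (Fin n ⊕ ℕ) L)))]
    exact halgne _ hfact_ne
  rw [mul_div_assoc, mul_comm (algebraMap (MvPowerSeries (Fin n ⊕ ℕ) L)
    (FractionRing (MvPowerSeries (Fin n ⊕ ℕ) L)) (Vdm n)) _, mul_div_assoc,
    div_self (halgne _ hVne), mul_one, ← mul_assoc, inv_mul_cancel₀ h1, one_mul]

end MainEngine

section Final

lemma facPow_zero (G : FGL L) (t : MvPowerSeries σ L) (bs : ℕ → MvPowerSeries σ L) :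
    facPow G t bs 0 = 1 := by
  unfold facPow
  rw [Finset.range_zero, Finset.prod_empty]

lemma facPowQ_zero (G : FGL L) (t : MvPowerSeries σ L) (bs : ℕ → MvPowerSeries σ L) :
    facPowQ G t bs 0 = 1 := rfl

lemma spLen_le {n : ℕ} {lam : Fin n → ℕ} (hlam : IsSP lam) (i : Fin n)
    (hi : spLen lam ≤ (i : ℕ)) : lam i = 0 := by
  classical
  by_contra hne
  have hdc : ∀ j : Fin n, j ≤ i → lam j ≠ 0 := by
    intro j hj
    rcases eq_or_lt_of_le hj with rfl | hlt
    · exact hne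
    · rcases hlam j i hlt with h | h
      · omega
      · exact absurd h.2 hne
  have hsub : Finset.Iic i ⊆ Finset.univ.filter (fun j => lam j ≠ 0) := by
    intro j hj
    rw [Finset.mem_Iic] at hj
    exact Finset.mem_filter.mpr ⟨Finset.mem_univ _, hdc j hj⟩
  have hcard := Finset.card_le_card hsub
  rw [Fin.card_Iic] at hcard
  unfold spLen at hi
  omega

lemma double_prod_invariant {M : Type} [CommMonoid M] {n r : ℕ} (F : Fin n → Fin n → M)
    (w v : Equiv.Perm (Fin n)) (hv : ∀ i : Fin n, (i : ℕ) < r → v i = i) :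
    ∏ i ∈ Finset.univ.filter (fun i : Fin n => (i : ℕ) < r), ∏ j ∈ Finset.Ioi i,
        F ((w * v) i) ((w * v) j) =
      ∏ i ∈ Finset.univ.filter (fun i : Fin n => (i : ℕ) < r), ∏ j ∈ Finset.Ioi i,
        F (w i) (w j) := by
  refine Finset.prod_congr rfl fun i hi => ?_
  rw [Finset.mem_filter] at hi
  have hir := hi.2
  have hwi : (w * v) i = w i := by
    rw [Equiv.Perm.mul_apply, hv i hir]
  calc ∏ j ∈ Finset.Ioi i, F ((w * v) i) ((w * v) j)
      = ∏ j ∈ Finset.Ioi i, F (w i) (w (v j)) := by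
        refine Finset.prod_congr rfl fun j _ => ?_
        rw [hwi]
        rfl
    _ = ∏ j ∈ Finset.Ioi i, F (w i) (w j) :=
        prod_Ioi_reindex (M := M) (r := r) v hv i hir (fun j => F (w i) (w j))

lemma prod_facPow_invariant {n : ℕ} {lam : Fin n → ℕ} (hlam : IsSP lam)
    (G : FGL L) (fp : MvPowerSeries (Fin n ⊕ ℕ) L → ℕ → MvPowerSeries (Fin n ⊕ ℕ) L)
    (hfp : ∀ t, fp t 0 = 1)
    (w v : Equiv.Perm (Fin n)) (hv : ∀ i : Fin n, (i : ℕ) < spLen lam → v i = i) :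
    ∏ i : Fin n, fp (X (Sum.inl ((w * v) i))) (lam i) =
      ∏ i : Fin n, fp (X (Sum.inl (w i))) (lam i) := by
  classical
  have hsplit : ∀ w' : Equiv.Perm (Fin n),
      ∏ i : Fin n, fp (X (Sum.inl (w' i))) (lam i) =
      ∏ i ∈ Finset.univ.filter (fun i : Fin n => (i : ℕ) < spLen lam),
        fp (X (Sum.inl (w' i))) (lam i) := by
    intro w'
    refine (Finset.prod_subset (Finset.filter_subset _ _) ?_).symm
    intro i _ hni
    rw [Finset.mem_filter] at hni
    have : ¬ (i : ℕ) < spLen lam := fun hc => hni ⟨Finset.mem_univ _, hc⟩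
    rw [spLen_le hlam i (by omega), hfp]
  rw [hsplit (w * v), hsplit w]
  refine Finset.prod_congr rfl fun i hi => ?_
  rw [Finset.mem_filter] at hi
  rw [Equiv.Perm.mul_apply, hv i hi.2]

end Final

end SchurAux
/-- For a strict partition `λ` of length `r ≤ n`, the universal
factorial Schur functions `P^L_λ(x_1,…,x_n|b)` and `Q^L_λ(x_1,…,x_n|b)` are
well defined elements of `L[[b]][[x_1,…,x_n]]`: the symmetrized sums of rational
functions defining them are (images of) genuine formal power series in the
variables `x_i = X (inl i)` and `b_j = X (inr (j-1))`. -/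
theorem universal_factorial_schur_PQ_well_defined
    {L : Type} [CommRing L] [IsDomain L] [CharZero L] (G : FGL L)
    (n : ℕ) (lam : Fin n → ℕ) (hlam : IsSP lam) :
    (∃ g : MvPowerSeries (Fin n ⊕ ℕ) L,
      PLgen G n (spLen lam) lam (fun i => MvPowerSeries.X (Sum.inl i))
          (fun j => MvPowerSeries.X (Sum.inr j)) =
        algebraMap (MvPowerSeries (Fin n ⊕ ℕ) L) (FractionRing (MvPowerSeries (Fin n ⊕ ℕ) L)) g) ∧
    (∃ g : MvPowerSeries (Fin n ⊕ ℕ) L,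
      QLgen G n (spLen lam) lam (fun i => MvPowerSeries.X (Sum.inl i))
          (fun j => MvPowerSeries.X (Sum.inr j)) =
        algebraMap (MvPowerSeries (Fin n ⊕ ℕ) L) (FractionRing (MvPowerSeries (Fin n ⊕ ℕ) L)) g) := by
  classical
  constructor
  · obtain ⟨g, hg⟩ := SchurAux.main_engine G n (spLen lam)
      (fun w => (∏ i : Fin n, facPow G (MvPowerSeries.X (Sum.inl (w i)))
          (fun j => MvPowerSeries.X (Sum.inr j)) (lam i)) *
        ∏ i ∈ Finset.univ.filter (fun i : Fin n => (i : ℕ) < spLen lam), ∏ j ∈ Finset.Ioi i,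
          fadd G.a (MvPowerSeries.X (Sum.inl (w i))) (MvPowerSeries.X (Sum.inl (w j))))
      (by
        intro w v hv
        rw [SchurAux.prod_facPow_invariant hlam G
          (fun t k => facPow G t (fun j => MvPowerSeries.X (Sum.inr j)) k)
          (fun t => SchurAux.facPow_zero G t _) w v hv]
        congr 1
        exact SchurAux.double_prod_invariant
          (fun i' j' => fadd G.a (MvPowerSeries.X (Sum.inl i')) (MvPowerSeries.X (Sum.inl j')))
          w v hv)
      (by
        intro a b hab w
        rw [map_mul]
        congr 1
        · rw [map_prod]
          refine Finset.prod_congr rfl fun i _ => ?_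
          rw [SchurAux.prename_facPow _ G _ _
            (fun j => by rw [SchurAux.prename_X]; rfl), SchurAux.prename_X]
          rfl
        · rw [map_prod]
          refine Finset.prod_congr rfl fun i _ => ?_
          rw [map_prod]
          refine Finset.prod_congr rfl fun j _ => ?_
          rw [SchurAux.prename_fadd, SchurAux.prename_X, SchurAux.prename_X]
          rfl)
    exact ⟨g, hg⟩
  · obtain ⟨g, hg⟩ := SchurAux.main_engine G n (spLen lam)
      (fun w => (∏ i : Fin n, facPowQ G (MvPowerSeries.X (Sum.inl (w i)))
          (fun j => MvPowerSeries.X (Sum.inr j)) (lam i)) *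
        ∏ i ∈ Finset.univ.filter (fun i : Fin n => (i : ℕ) < spLen lam), ∏ j ∈ Finset.Ioi i,
          fadd G.a (MvPowerSeries.X (Sum.inl (w i))) (MvPowerSeries.X (Sum.inl (w j))))
      (by
        intro w v hv
        rw [SchurAux.prod_facPow_invariant hlam G
          (fun t k => facPowQ G t (fun j => MvPowerSeries.X (Sum.inr j)) k)
          (fun t => SchurAux.facPowQ_zero G t _) w v hv]
        congr 1
        exact SchurAux.double_prod_invariant
          (fun i' j' => fadd G.a (MvPowerSeries.X (Sum.inl i')) (MvPowerSeries.X (Sum.inl j')))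
          w v hv)
      (by
        intro a b hab w
        rw [map_mul]
        congr 1
        · rw [map_prod]
          refine Finset.prod_congr rfl fun i _ => ?_
          rw [SchurAux.prename_facPowQ _ G _ _
            (fun j => by rw [SchurAux.prename_X]; rfl), SchurAux.prename_X]
          rfl
        · rw [map_prod]
          refine Finset.prod_congr rfl fun i _ => ?_
          rw [map_prod]
          refine Finset.prod_congr rfl fun j _ => ?_
          rw [SchurAux.prename_fadd, SchurAux.prename_X, SchurAux.prename_X]
          rfl)
    exact ⟨g, hg⟩

end
end

section
/- For every positive integer n, with ρ_m = (m, m−1, ..., 1): P^L_{ρ_{n−1}}(x_1,...,x_n) = ( ∏_{1≤i<j≤n} (x_i +_F x_j) ) · s^L_∅(x_1,...,x_n) and Q^L_{ρ_n}(x_1,...,x_n) = ( ∏_{1≤i≤j≤n} (x_i +_F x_j) ) · s^L_∅(x_1,...,x_n). -/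
/- ## Formal group laws, coefficientwise substitution, universal Schur P,Q-functions -/

noncomputable section

open Finset MvPowerSeries

variable {L : Type} [CommRing L] {σ : Type}

variable [IsDomain L] [CharZero L]

lemma prod_Ioi_perm {M : Type*} [CommMonoid M] {n : ℕ} (w : Equiv.Perm (Fin n))
    (g : Fin n → Fin n → M) (hg : ∀ i j, g i j = g j i) :
    (∏ i : Fin n, ∏ j ∈ Finset.Ioi i, g (w i) (w j)) =
      ∏ i : Fin n, ∏ j ∈ Finset.Ioi i, g i j := by
  rw [Finset.prod_sigma', Finset.prod_sigma']
  refine Finset.prod_nbij'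
    (fun p => if w p.1 < w p.2 then ⟨w p.1, w p.2⟩ else ⟨w p.2, w p.1⟩)
    (fun p => if w⁻¹ p.1 < w⁻¹ p.2 then ⟨w⁻¹ p.1, w⁻¹ p.2⟩ else ⟨w⁻¹ p.2, w⁻¹ p.1⟩)
    ?_ ?_ ?_ ?_ ?_
  · intro p hp
    simp only [Finset.mem_sigma, Finset.mem_univ, Finset.mem_Ioi, true_and] at hp ⊢
    split_ifs with h
    · exact h
    · have hne : w p.1 ≠ w p.2 := fun hc => absurd (w.injective hc) (ne_of_lt hp)
      exact lt_of_le_of_ne (not_lt.mp h) (Ne.symm hne)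
  · intro p hp
    simp only [Finset.mem_sigma, Finset.mem_univ, Finset.mem_Ioi, true_and] at hp ⊢
    split_ifs with h
    · exact h
    · have hne : w⁻¹ p.1 ≠ w⁻¹ p.2 := fun hc => absurd ((w⁻¹).injective hc) (ne_of_lt hp)
      exact lt_of_le_of_ne (not_lt.mp h) (Ne.symm hne)
  · rintro ⟨p1, p2⟩ hp
    simp only [Finset.mem_sigma, Finset.mem_univ, Finset.mem_Ioi, true_and] at hp
    by_cases h : w p1 < w p2 <;>
      simp [h, hp, hp.not_gt, Equiv.symm_apply_apply]
  · rintro ⟨p1, p2⟩ hp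
    simp only [Finset.mem_sigma, Finset.mem_univ, Finset.mem_Ioi, true_and] at hp
    by_cases h : w.symm p1 < w.symm p2 <;>
      simp [h, hp, hp.not_gt, Equiv.apply_symm_apply]
  · rintro ⟨p1, p2⟩ hp
    by_cases h : w p1 < w p2 <;> simp [h, hg (w p1) (w p2)]

lemma filter_lt_prod {M : Type*} [CommMonoid M] {n : ℕ} (r : ℕ) (hr : n - 1 ≤ r)
    (h : Fin n → (j : Fin n) → M) :
    (∏ i ∈ Finset.univ.filter (fun i : Fin n => (i : ℕ) < r), ∏ j ∈ Finset.Ioi i, h i j)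
      = ∏ i : Fin n, ∏ j ∈ Finset.Ioi i, h i j := by
  apply Finset.prod_subset (Finset.filter_subset _ _)
  intro i _ hi
  simp only [Finset.mem_filter, Finset.mem_univ, true_and, not_lt] at hi
  have he : Finset.Ioi i = ∅ := by
    apply Finset.eq_empty_of_forall_notMem
    intro j hj
    rw [Finset.mem_Ioi, Fin.lt_def] at hj
    have h1 := j.isLt
    have h2 := i.isLt
    omega
  simp [he]

/-- Factorization for the staircase partitions `ρ_{n-1}` and `ρ_n`:
`P^L_{ρ_{n-1}}(x_1,…,x_n) = (∏_{i<j}(x_i +_F x_j))·s^L_∅(x_1,…,x_n)` and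
`Q^L_{ρ_n}(x_1,…,x_n) = (∏_{i≤j}(x_i +_F x_j))·s^L_∅(x_1,…,x_n)`. -/
theorem staircase_factorization
    {L : Type} [CommRing L] [IsDomain L] [CharZero L] (G : FGL L) (n : ℕ) (hn : 0 < n) :
    PLgen G n (n - 1) (fun i : Fin n => n - 1 - (i : ℕ)) (fun i => MvPowerSeries.X i) 0 =
      algebraMap (MvPowerSeries (Fin n) L) (FractionRing (MvPowerSeries (Fin n) L))
        (∏ i : Fin n, ∏ j ∈ Finset.Ioi i, fadd G.a (MvPowerSeries.X i) (MvPowerSeries.X j)) *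
      sLgen G n 0 (fun i => MvPowerSeries.X i) 0 ∧
    QLgen G n n (fun i : Fin n => n - (i : ℕ)) (fun i => MvPowerSeries.X i) 0 =
      algebraMap (MvPowerSeries (Fin n) L) (FractionRing (MvPowerSeries (Fin n) L))
        (∏ i : Fin n, ∏ j ∈ Finset.Ici i, fadd G.a (MvPowerSeries.X i) (MvPowerSeries.X j)) *
      sLgen G n 0 (fun i => MvPowerSeries.X i) 0 := by
  classical
  set X : Fin n → MvPowerSeries (Fin n) L := fun i => MvPowerSeries.X i with hXdef
  have hX : ∀ i : Fin n, MvPowerSeries.constantCoeff (σ := Fin n) (R := L) (X i) = 0 :=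
    fun i => MvPowerSeries.constantCoeff_X i
  have hg : ∀ i j : Fin n, fadd G.a (X i) (X j) = fadd G.a (X j) (X i) :=
    fun i j => G.comm' _ _ (hX i) (hX j)
  constructor
  · unfold PLgen sLgen
    have h1 : n - (n - 1) = 1 := by omega
    rw [h1]
    simp only [Nat.factorial_one, Nat.cast_one, inv_one, one_mul, Finset.mul_sum,
      Pi.zero_apply, Nat.zero_add]
    refine Finset.sum_congr rfl fun w _ => ?_
    rw [filter_lt_prod (n - 1) le_rfl (fun i j => fadd G.a (X (w i)) (X (w j))),
      filter_lt_prod (n - 1) le_rfl (fun i j => fadd G.a (X (w i)) (G.neg (X (w j)))),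
      prod_Ioi_perm w (fun i j => fadd G.a (X i) (X j)) hg]
    rw [map_mul, mul_comm, mul_div_assoc]
  · unfold QLgen sLgen
    have h1 : n - n = 0 := by omega
    rw [h1]
    simp only [Nat.factorial_zero, Nat.cast_one, inv_one, one_mul, Finset.mul_sum,
      Pi.zero_apply, Nat.zero_add]
    refine Finset.sum_congr rfl fun w _ => ?_
    rw [filter_lt_prod n (by omega) (fun i j => fadd G.a (X (w i)) (X (w j))),
      filter_lt_prod n (by omega) (fun i j => fadd G.a (X (w i)) (G.neg (X (w j)))),
      prod_Ioi_perm w (fun i j => fadd G.a (X i) (X j)) hg]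
    have hQ : (∏ i : Fin n, facPowQ G (X (w i)) 0 (n - (i : ℕ)))
        = (∏ i : Fin n, fadd G.a (X i) (X i)) *
          ∏ i : Fin n, facPow G (X (w i)) 0 (n - 1 - (i : ℕ)) := by
      calc (∏ i : Fin n, facPowQ G (X (w i)) 0 (n - (i : ℕ)))
          = ∏ i : Fin n, (fadd G.a (X (w i)) (X (w i)) *
              facPow G (X (w i)) 0 (n - 1 - (i : ℕ))) := by
            refine Finset.prod_congr rfl fun i _ => ?_
            have hi : n - (i : ℕ) = (n - 1 - (i : ℕ)) + 1 := by
              have := i.isLt; omega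
            rw [hi]
            rfl
        _ = (∏ i : Fin n, fadd G.a (X (w i)) (X (w i))) *
              ∏ i : Fin n, facPow G (X (w i)) 0 (n - 1 - (i : ℕ)) :=
            Finset.prod_mul_distrib
        _ = (∏ i : Fin n, fadd G.a (X i) (X i)) *
              ∏ i : Fin n, facPow G (X (w i)) 0 (n - 1 - (i : ℕ)) := by
            rw [Equiv.prod_comp w (fun i => fadd G.a (X i) (X i))]
    have hIci : (∏ i : Fin n, ∏ j ∈ Finset.Ici i, fadd G.a (X i) (X j))
        = (∏ i : Fin n, fadd G.a (X i) (X i)) *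
          ∏ i : Fin n, ∏ j ∈ Finset.Ioi i, fadd G.a (X i) (X j) := by
      rw [← Finset.prod_mul_distrib]
      exact Finset.prod_congr rfl fun i _ => by
        rw [Finset.Ici_eq_cons_Ioi, Finset.prod_cons]
    rw [hQ, hIci]
    rw [map_mul, map_mul, map_mul]
    ring

end
end

section
/- Hook sum formula: for every k ≥ 1, gp_k(y) = Σ_{a=1}^k g_{(a,1^{k−a})}(y), where g_{(a,1^{k−a})} is the Lam–Pylyavskyy dual stable Grothendieck polynomial indexed by the hook partition (a, 1, 1, ..., 1) with k − a parts equal to 1. -/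
/- The alphabet `1' < 1 < 2' < 2 < ⋯` is encoded by `ℕ`: the primed letter
`(m+1)'` is the even code `2m` and the unprimed letter `m+1` is the odd code
`2m+1`; both correspond to the variable `y_{m+1} = X m` of `MvPowerSeries ℕ ℤ`.
A one-row tableau of shape `(k)` with weakly increasing rows (and trivially
weakly increasing columns) is a monotone word `w : Fin k → ℕ`. -/

noncomputable section

/-- The weight `y^T` of a one-row tableau: each occurrence of an unprimed letter
`i` contributes `y_i` (one column per box), and each primed letter `i'` that
occurs contributes `y_i` once (it occurs in one row). -/
def wordWt (k : ℕ) (w : Fin k → ℕ) : ℕ →₀ ℕ :=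
  (∑ i : Fin k, if Odd (w i) then Finsupp.single (w i / 2) 1 else 0) +
  ∑ c ∈ (Finset.univ.image w).filter (fun c => Even c), Finsupp.single (c / 2) 1

/-- `gp_k(y) = ∑_{T ∈ Tab'((k))} y^T`: the sum of weights over one-row tableaux of
shape `(k)` whose leftmost box contains a primed letter, defined coefficientwise. -/
def gpPoly (k : ℕ) : MvPowerSeries ℕ ℤ :=
  fun d => (((Finset.univ : Finset (Fin k → Fin (2 * d.support.sup id + 2))).filter
    (fun w : Fin k → Fin (2 * d.support.sup id + 2) =>
      Monotone w ∧ (∀ h : 0 < k, Even ((w ⟨0, h⟩ : ℕ))) ∧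
      wordWt k (fun i => (w i : ℕ)) = d)).card : ℤ)

/- Reverse plane partitions of hook shape `(a, 1^m)`: entries are positive
integers, encoded `0`-based (the code `v : ℕ` is the entry `v+1`, contributing to
the variable `y_{v+1} = X v`).  Such a filling consists of a weakly increasing row
`r : Fin a → ℕ` and a weakly increasing column tail `c : Fin m → ℕ` below the
corner, with corner entry `r 0 ≤ c 0`. -/

/-- The weight of a hook-shaped reverse plane partition: each entry value `v`
contributes `y_{v+1}` once for every column containing it; the first column
consists of the corner together with the column tail, the remaining `a-1`
columns are the single boxes `r 1, …, r (a-1)`. -/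
def hookWt (a m : ℕ) (r : Fin a → ℕ) (c : Fin m → ℕ) : ℕ →₀ ℕ :=
  (∑ j : Fin a, if (j : ℕ) ≠ 0 then Finsupp.single (r j) 1 else 0) +
  ∑ v ∈ (Finset.univ.image c ∪
      ((Finset.univ : Finset (Fin a)).filter (fun j : Fin a => (j : ℕ) = 0)).image r),
    Finsupp.single v 1

/-- The Lam–Pylyavskyy dual stable Grothendieck polynomial `g_{(a,1^m)}(y)` of
hook shape, defined coefficientwise: the coefficient of a monomial `d` is the
number of reverse plane partitions of shape `(a,1^m)` of weight `d`. -/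
def ghook (a m : ℕ) : MvPowerSeries ℕ ℤ :=
  fun d => (((Finset.univ :
      Finset ((Fin a → Fin (d.support.sup id + 1)) × (Fin m → Fin (d.support.sup id + 1)))).filter
    (fun rc : (Fin a → Fin (d.support.sup id + 1)) × (Fin m → Fin (d.support.sup id + 1)) =>
      Monotone rc.1 ∧ Monotone rc.2 ∧
      (∀ (ha : 0 < a) (hm : 0 < m), rc.1 ⟨0, ha⟩ ≤ rc.2 ⟨0, hm⟩) ∧
      hookWt a m (fun j => (rc.1 j : ℕ)) (fun j => (rc.2 j : ℕ)) = d)).card : ℤ)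

namespace HookAux


/-- weight of a multiset of letters -/
def msWt (W : Multiset ℕ) : ℕ →₀ ℕ :=
  ((W.filter (fun n => Odd n)).map (fun n => Finsupp.single (n / 2) 1)).sum +
  ∑ v ∈ (W.filter (fun n => Even n)).toFinset, Finsupp.single (v / 2) 1

lemma sum_map_filter {M : Type*} [AddCommMonoid M] (p : ℕ → Prop) [DecidablePred p]
    (f : ℕ → M) (W : Multiset ℕ) :
    ((W.filter p).map f).sum = (W.map (fun n => if p n then f n else 0)).sum := by
  induction W using Multiset.induction with
  | empty => simp
  | cons a s ih =>
    by_cases h : p a <;> simp [Multiset.filter_cons, h, ih]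

lemma wordWt_eq (k : ℕ) (w : Fin k → ℕ) :
    wordWt k w = msWt ↑(List.ofFn w) := by
  unfold wordWt msWt
  congr 1
  · rw [sum_map_filter]
    have : (Multiset.map (fun n => if Odd n then Finsupp.single (n/2) 1 else 0)
        (↑(List.ofFn w) : Multiset ℕ)) =
        ↑(List.ofFn (fun i => if Odd (w i) then Finsupp.single (w i/2) 1 else 0)) := by
      simp [Multiset.map_coe, List.map_ofFn]; rfl
    rw [this, Multiset.sum_coe, List.sum_ofFn]
  · have h1 : Finset.univ.image w = (↑(List.ofFn w) : Multiset ℕ).toFinset := by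
      rw [Fin.univ_image_def]; rfl
    rw [h1, Multiset.toFinset_filter]



lemma mono_eq_of_coe_eq {n : ℕ} {w w' : Fin n → ℕ} (hw : Monotone w) (hw' : Monotone w')
    (h : (↑(List.ofFn w) : Multiset ℕ) = ↑(List.ofFn w')) : w = w' :=
  List.ofFn_injective (List.Perm.eq_of_pairwise' hw.sortedLE_ofFn.pairwise
    hw'.sortedLE_ofFn.pairwise (Multiset.coe_eq_coe.mp h))

def sortFun (k : ℕ) (W : Multiset ℕ) (h : Multiset.card W = k) : Fin k → ℕ :=
  fun i => (W.sort (· ≤ ·)).get (Fin.cast (by rw [Multiset.length_sort, h]) i)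

lemma sortFun_monotone (k : ℕ) (W : Multiset ℕ) (h : Multiset.card W = k) :
    Monotone (sortFun k W h) := fun i j hij =>
  (Multiset.pairwise_sort W (· ≤ ·)).sortedLE.monotone_get hij

lemma ofFn_sortFun (k : ℕ) (W : Multiset ℕ) (h : Multiset.card W = k) :
    List.ofFn (sortFun k W h) = W.sort (· ≤ ·) := by
  apply List.ext_get (by simp [h])
  intro i h1 h2
  simp [sortFun, List.get_ofFn]

lemma coe_ofFn_sortFun (k : ℕ) (W : Multiset ℕ) (h : Multiset.card W = k) :
    (↑(List.ofFn (sortFun k W h)) : Multiset ℕ) = W := by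
  rw [ofFn_sortFun, Multiset.sort_eq]

lemma sortFun_mem (k : ℕ) (W : Multiset ℕ) (h : Multiset.card W = k) (i : Fin k) :
    sortFun k W h i ∈ W := by
  rw [← Multiset.mem_sort (· ≤ ·)]
  exact List.mem_iff_get.mpr ⟨_, rfl⟩

lemma sortFun_zero_le (k : ℕ) (W : Multiset ℕ) (h : Multiset.card W = k) (h0 : 0 < k)
    {x : ℕ} (hx : x ∈ W) : sortFun k W h ⟨0, h0⟩ ≤ x := by
  rw [← Multiset.mem_sort (· ≤ ·)] at hx
  obtain ⟨i, rfl⟩ := List.mem_iff_get.mp hx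
  exact (Multiset.pairwise_sort W (· ≤ ·)).sortedLE.monotone_get (by simp [Fin.le_def])

lemma sortFun_congr {k : ℕ} {W W' : Multiset ℕ} (h : Multiset.card W = k)
    (hWW : W = W') : sortFun k W h = sortFun k W' (hWW ▸ h) := by subst hWW; rfl

lemma coe_ofFn_succ {n : ℕ} (r : Fin (n+1) → ℕ) :
    (↑(List.ofFn r) : Multiset ℕ) = r 0 ::ₘ ↑(List.ofFn (fun j : Fin n => r j.succ)) := by
  rw [List.ofFn_succ]; rfl

lemma card_filter_eq (n : ℕ) (w : Fin n → ℕ) (p : ℕ → Prop) [DecidablePred p] :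
    (Finset.univ.filter (fun i => p (w i))).card =
      Multiset.card ((↑(List.ofFn w) : Multiset ℕ).filter p) := by
  rw [← Fin.univ_val_map, Multiset.filter_map, Multiset.card_map, Finset.card]
  rfl

def hookMs (b m : ℕ) (r : Fin (b+1) → ℕ) (c : Fin m → ℕ) : Multiset ℕ :=
  (2 * r 0) ::ₘ ((↑(List.ofFn (fun j : Fin b => r j.succ)) : Multiset ℕ).map (fun v => 2*v+1)
    + (↑(List.ofFn c) : Multiset ℕ).map (fun v => 2*v))

lemma hookMs_card (b m : ℕ) (r : Fin (b+1) → ℕ) (c : Fin m → ℕ) :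
    Multiset.card (hookMs b m r c) = b + 1 + m := by
  simp [hookMs]; omega

lemma mem_hookMs {b m : ℕ} {r : Fin (b+1) → ℕ} {c : Fin m → ℕ} {x : ℕ} :
    x ∈ hookMs b m r c ↔
      x = 2 * r 0 ∨ (∃ j : Fin b, x = 2 * r j.succ + 1) ∨ ∃ j : Fin m, x = 2 * c j := by
  simp [hookMs, List.mem_ofFn, eq_comm]

lemma hookMs_filter_odd (b m : ℕ) (r : Fin (b+1) → ℕ) (c : Fin m → ℕ) :
    (hookMs b m r c).filter (fun n => Odd n) =
      (↑(List.ofFn (fun j : Fin b => r j.succ)) : Multiset ℕ).map (fun v => 2*v+1) := by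
  rw [hookMs, Multiset.filter_cons_of_neg _ (by simp [Nat.odd_iff]),
    Multiset.filter_add, Multiset.filter_map, Multiset.filter_map]
  rw [show Multiset.filter ((fun n => Odd n) ∘ fun v => 2*v+1)
      (↑(List.ofFn (fun j : Fin b => r j.succ)) : Multiset ℕ) = _ from
    Multiset.filter_eq_self.mpr (fun a _ => by simp [Nat.odd_iff, Nat.add_mod]),
    show Multiset.filter ((fun n => Odd n) ∘ fun v => 2*v)
      (↑(List.ofFn c) : Multiset ℕ) = 0 from
    Multiset.filter_eq_nil.mpr (fun a _ => by simp [Nat.odd_iff, Nat.mul_mod_right])]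
  simp

lemma hookMs_filter_even (b m : ℕ) (r : Fin (b+1) → ℕ) (c : Fin m → ℕ) :
    (hookMs b m r c).filter (fun n => Even n) =
      (2 * r 0) ::ₘ (↑(List.ofFn c) : Multiset ℕ).map (fun v => 2*v) := by
  rw [hookMs, Multiset.filter_cons_of_pos _ (by simp [Nat.even_iff]),
    Multiset.filter_add, Multiset.filter_map, Multiset.filter_map]
  rw [show Multiset.filter ((fun n => Even n) ∘ fun v => 2*v+1)
      (↑(List.ofFn (fun j : Fin b => r j.succ)) : Multiset ℕ) = 0 from
    Multiset.filter_eq_nil.mpr (fun a _ => by simp [Nat.even_iff, Nat.add_mod]),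
    show Multiset.filter ((fun n => Even n) ∘ fun v => 2*v)
      (↑(List.ofFn c) : Multiset ℕ) = _ from
    Multiset.filter_eq_self.mpr (fun a _ => by simp [Nat.even_iff, Nat.mul_mod_right])]
  simp

lemma hookMs_wt (b m : ℕ) (r : Fin (b+1) → ℕ) (c : Fin m → ℕ) :
    msWt (hookMs b m r c) = hookWt (b+1) m r c := by
  unfold msWt hookWt
  congr 1
  · rw [hookMs_filter_odd, Multiset.map_map]
    have h1 : Multiset.map ((fun n => Finsupp.single (n/2) 1) ∘ fun v => 2*v+1)
        (↑(List.ofFn (fun j : Fin b => r j.succ)) : Multiset ℕ) =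
        Multiset.map (fun v => Finsupp.single v 1)
          (↑(List.ofFn (fun j : Fin b => r j.succ)) : Multiset ℕ) :=
      Multiset.map_congr rfl (fun x _ => by
        show Finsupp.single ((2*x+1)/2) 1 = Finsupp.single x 1
        congr 1
        omega)
    rw [h1, Multiset.map_coe, List.map_ofFn, Multiset.sum_coe, List.sum_ofFn,
      Fin.sum_univ_succ]
    simp
  · rw [hookMs_filter_even, Multiset.toFinset_cons, Multiset.toFinset_map]
    have h2 : Finset.univ.image c = (↑(List.ofFn c) : Multiset ℕ).toFinset := by
      rw [Fin.univ_image_def]; rfl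
    have h3 : (Finset.univ : Finset (Fin (b+1))).filter (fun j : Fin (b+1) => (j : ℕ) = 0) =
        {(0 : Fin (b+1))} := by
      ext j
      simp only [Finset.mem_filter, Finset.mem_univ, true_and, Finset.mem_singleton, Fin.ext_iff,
        Fin.val_zero]
    rw [h2, h3, Finset.image_singleton,
      show ∀ s : Finset ℕ, s ∪ {r 0} = insert (r 0) s from fun s => by
        rw [Finset.union_comm]; rfl,
      show insert (2 * r 0) (Finset.image (fun v => 2*v) (↑(List.ofFn c) : Multiset ℕ).toFinset)
        = Finset.image (fun v => 2*v)
          (insert (r 0) (↑(List.ofFn c) : Multiset ℕ).toFinset) from by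
        rw [Finset.image_insert],
      Finset.sum_image (by intro x _ y _ h; beta_reduce at h; omega)]
    apply Finset.sum_congr rfl
    intro x _
    congr 1
    omega


lemma hookMs_le {b m : ℕ} {r : Fin (b+1) → ℕ} {c : Fin m → ℕ}
    (hr : Monotone r) (hc : Monotone c) (hrc : ∀ hm : 0 < m, r 0 ≤ c ⟨0, hm⟩) :
    ∀ x ∈ hookMs b m r c, 2 * r 0 ≤ x := by
  intro x hx
  rcases mem_hookMs.mp hx with h | ⟨j, rfl⟩ | ⟨j, rfl⟩
  · omega
  · have := hr (Fin.zero_le j.succ); omega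
  · have h1 := hrc j.pos
    have h2 := hc (show (⟨0, j.pos⟩ : Fin m) ≤ j from Fin.mk_le_mk.mpr (Nat.zero_le _))
    omega

lemma hookMs_even_of_le {b m : ℕ} {r : Fin (b+1) → ℕ} {c : Fin m → ℕ}
    (hr : Monotone r) {x : ℕ} (hx : x ∈ hookMs b m r c) (hle : x ≤ 2 * r 0) : Even x := by
  rcases mem_hookMs.mp hx with h | ⟨j, rfl⟩ | ⟨j, rfl⟩
  · subst h; exact even_two_mul _
  · have := hr (Fin.zero_le j.succ); omega
  · exact even_two_mul _

def toWord (N k b m : ℕ) (hk : b + 1 + m = k)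
    (rc : (Fin (b+1) → Fin (N+1)) × (Fin m → Fin (N+1))) : Fin k → Fin (2*N+2) :=
  fun i => ⟨sortFun k (hookMs b m (fun j => (rc.1 j : ℕ)) (fun j => (rc.2 j : ℕ)))
      (by rw [hookMs_card]; exact hk) i, by
    have hx := sortFun_mem k (hookMs b m (fun j => (rc.1 j : ℕ)) (fun j => (rc.2 j : ℕ)))
      (by rw [hookMs_card]; exact hk) i
    rcases mem_hookMs.mp hx with h | ⟨j, h⟩ | ⟨j, h⟩
    · have := (rc.1 0).isLt; omega
    · have := (rc.1 j.succ).isLt; omega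
    · have := (rc.2 j).isLt; omega⟩

lemma card_eq (N k b m : ℕ) (hk : b + 1 + m = k) (d : ℕ →₀ ℕ) :
    ((Finset.univ : Finset ((Fin (b+1) → Fin (N+1)) × (Fin m → Fin (N+1)))).filter
      (fun rc => Monotone rc.1 ∧ Monotone rc.2 ∧
        (∀ (ha : 0 < b+1) (hm : 0 < m), rc.1 ⟨0, ha⟩ ≤ rc.2 ⟨0, hm⟩) ∧
        hookWt (b+1) m (fun j => (rc.1 j : ℕ)) (fun j => (rc.2 j : ℕ)) = d)).card =
    ((Finset.univ : Finset (Fin k → Fin (2*N+2))).filter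
      (fun w : Fin k → Fin (2*N+2) => (Monotone w ∧ (∀ h : 0 < k, Even ((w ⟨0,h⟩ : ℕ))) ∧
        wordWt k (fun i => (w i : ℕ)) = d) ∧
        (Finset.univ.filter (fun i => Odd ((w i : ℕ)))).card + 1 = b + 1)).card := by
  have hkpos : 0 < k := by omega
  apply Finset.card_bij (fun rc _ => toWord N k b m hk rc)
  -- membership
  · intro rc hrc
    rw [Finset.mem_filter] at hrc
    obtain ⟨-, h1, h2, h3, h4⟩ := hrc
    have hr : Monotone (fun j => ((rc.1 j : ℕ))) := fun i j hij => h1 hij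
    have hc : Monotone (fun j => ((rc.2 j : ℕ))) := fun i j hij => h2 hij
    have hrc0 : ∀ hm : 0 < m, (fun j => ((rc.1 j : ℕ))) 0 ≤ (fun j => ((rc.2 j : ℕ))) ⟨0, hm⟩ :=
      fun hm => h3 (Nat.succ_pos b) hm
    set L := hookMs b m (fun j => (rc.1 j : ℕ)) (fun j => (rc.2 j : ℕ)) with hLdef
    have hL : Multiset.card L = k := by rw [hLdef, hookMs_card]; exact hk
    rw [Finset.mem_filter]
    refine ⟨Finset.mem_univ _, ⟨?_, ?_, ?_⟩, ?_⟩
    · intro x y hxy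
      exact Fin.mk_le_mk.mpr (sortFun_monotone k L hL hxy)
    · intro h
      exact hookMs_even_of_le hr (sortFun_mem k L hL ⟨0, h⟩)
        (sortFun_zero_le k L hL h (mem_hookMs.mpr (Or.inl rfl)))
    · rw [wordWt_eq]
      have hcoe : (↑(List.ofFn (fun i => ((toWord N k b m hk rc i : ℕ)))) : Multiset ℕ) = L :=
        coe_ofFn_sortFun k L hL
      rw [hcoe, hLdef, hookMs_wt]
      exact h4
    · rw [card_filter_eq]
      have hcoe : (↑(List.ofFn (fun i => ((toWord N k b m hk rc i : ℕ)))) : Multiset ℕ) = L :=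
        coe_ofFn_sortFun k L hL
      rw [hcoe, hLdef, hookMs_filter_odd, Multiset.card_map]
      simp
  -- injectivity
  · intro rc hrc rc' hrc' heq
    rw [Finset.mem_filter] at hrc hrc'
    obtain ⟨-, h1, h2, h3, -⟩ := hrc
    obtain ⟨-, h1', h2', h3', -⟩ := hrc'
    set L := hookMs b m (fun j => (rc.1 j : ℕ)) (fun j => (rc.2 j : ℕ)) with hLdef
    set L' := hookMs b m (fun j => (rc'.1 j : ℕ)) (fun j => (rc'.2 j : ℕ)) with hLdef'
    have hL : Multiset.card L = k := by rw [hLdef, hookMs_card]; exact hk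
    have hL' : Multiset.card L' = k := by rw [hLdef', hookMs_card]; exact hk
    have hval : sortFun k L hL = sortFun k L' hL' :=
      funext fun i => congrArg Fin.val (congrFun heq i)
    have hLL : L = L' := by
      rw [← coe_ofFn_sortFun k L hL, ← coe_ofFn_sortFun k L' hL', hval]
    have ho := congrArg (Multiset.filter (fun n => Odd n)) hLL
    rw [hLdef, hLdef', hookMs_filter_odd, hookMs_filter_odd] at ho
    have htail : (↑(List.ofFn (fun j : Fin b => ((rc.1 j.succ : ℕ)))) : Multiset ℕ)
        = ↑(List.ofFn (fun j : Fin b => ((rc'.1 j.succ : ℕ)))) :=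
      Multiset.map_injective (f := fun v => 2*v+1) (fun x y hxy => by beta_reduce at hxy; omega) ho
    have he := congrArg (Multiset.filter (fun n => Even n)) hLL
    rw [hLdef, hLdef', hookMs_filter_even, hookMs_filter_even] at he
    have hminL : ∀ x ∈ (2 * ((rc.1 0 : ℕ))) ::ₘ
        (↑(List.ofFn (fun j => ((rc.2 j : ℕ)))) : Multiset ℕ).map (fun v => 2*v),
        2 * ((rc.1 0 : ℕ)) ≤ x := by
      intro x hx
      rcases Multiset.mem_cons.mp hx with h | h
      · omega
      · obtain ⟨v, hv, rfl⟩ := Multiset.mem_map.mp h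
        rw [Multiset.mem_coe, List.mem_ofFn] at hv
        obtain ⟨j, rfl⟩ := hv
        have ha := h3 (Nat.succ_pos b) j.pos
        have hb := h2 (show (⟨0, j.pos⟩ : Fin m) ≤ j from Fin.mk_le_mk.mpr (Nat.zero_le _))
        have ha' : (rc.1 0 : ℕ) ≤ (rc.2 ⟨0, j.pos⟩ : ℕ) := ha
        have hb' : (rc.2 ⟨0, j.pos⟩ : ℕ) ≤ (rc.2 j : ℕ) := hb
        beta_reduce
        omega
    have hminL' : ∀ x ∈ (2 * ((rc'.1 0 : ℕ))) ::ₘ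
        (↑(List.ofFn (fun j => ((rc'.2 j : ℕ)))) : Multiset ℕ).map (fun v => 2*v),
        2 * ((rc'.1 0 : ℕ)) ≤ x := by
      intro x hx
      rcases Multiset.mem_cons.mp hx with h | h
      · omega
      · obtain ⟨v, hv, rfl⟩ := Multiset.mem_map.mp h
        rw [Multiset.mem_coe, List.mem_ofFn] at hv
        obtain ⟨j, rfl⟩ := hv
        have ha' : (rc'.1 0 : ℕ) ≤ (rc'.2 ⟨0, j.pos⟩ : ℕ) := h3' (Nat.succ_pos b) j.pos
        have hb' : (rc'.2 ⟨0, j.pos⟩ : ℕ) ≤ (rc'.2 j : ℕ) :=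
          h2' (show (⟨0, j.pos⟩ : Fin m) ≤ j from Fin.mk_le_mk.mpr (Nat.zero_le _))
        beta_reduce
        omega
    have hmem1 := hminL' _ (he ▸ Multiset.mem_cons_self _ _)
    have hmem2 := hminL _ (he ▸ Multiset.mem_cons_self (2 * ((rc'.1 0 : ℕ)))
      ((↑(List.ofFn (fun j => ((rc'.2 j : ℕ)))) : Multiset ℕ).map (fun v => 2*v)))
    have h00 : ((rc.1 0 : ℕ)) = ((rc'.1 0 : ℕ)) := by omega
    rw [h00] at he
    have hC : (↑(List.ofFn (fun j => ((rc.2 j : ℕ)))) : Multiset ℕ)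
        = ↑(List.ofFn (fun j => ((rc'.2 j : ℕ)))) :=
      Multiset.map_injective (f := fun v => 2*v) (fun x y hxy => by beta_reduce at hxy; omega)
        ((Multiset.cons_inj_right _).mp he)
    have hr1 : (fun j => ((rc.1 j : ℕ))) = (fun j => ((rc'.1 j : ℕ))) := by
      apply mono_eq_of_coe_eq (fun i j hij => h1 hij) (fun i j hij => h1' hij)
      rw [coe_ofFn_succ, coe_ofFn_succ, htail, h00]
    have hr2 : (fun j => ((rc.2 j : ℕ))) = (fun j => ((rc'.2 j : ℕ))) := by
      apply mono_eq_of_coe_eq (fun i j hij => h2 hij) (fun i j hij => h2' hij) hC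
    have e1 : rc.1 = rc'.1 := funext fun j => Fin.val_injective (congrFun hr1 j)
    have e2 : rc.2 = rc'.2 := funext fun j => Fin.val_injective (congrFun hr2 j)
    exact Prod.ext e1 e2
  -- surjectivity
  · intro w hw
    rw [Finset.mem_filter] at hw
    obtain ⟨-, ⟨hmono, heven, hwt⟩, hcount⟩ := hw
    set W : Multiset ℕ := ↑(List.ofFn (fun i => ((w i : ℕ)))) with hWdef
    have hW : Multiset.card W = k := by simp [hWdef]
    set w0 : ℕ := (w ⟨0, hkpos⟩ : ℕ) with hw0def
    set oddsW := W.filter (fun n => Odd n) with hodef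
    set evensW := W.filter (fun n => Even n) with hedef
    have hsplit : oddsW + evensW = W := by
      rw [hodef, hedef]
      rw [show Multiset.filter (fun n => Even n) W
          = Multiset.filter (fun n => ¬ Odd n) W from
        Multiset.filter_congr (fun x _ => by rw [Nat.even_iff, Nat.odd_iff]; omega)]
      exact Multiset.filter_add_not _ _
    have hcardodd : Multiset.card oddsW = b := by
      have := card_filter_eq k (fun i => ((w i : ℕ))) (fun n => Odd n)
      rw [← hWdef, ← hodef] at this
      omega
    have hWlt : ∀ x ∈ W, x < 2*N+2 := by
      intro x hx
      rw [hWdef, Multiset.mem_coe, List.mem_ofFn] at hx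
      obtain ⟨i, rfl⟩ := hx
      exact (w i).isLt
    have hmin : ∀ x ∈ W, w0 ≤ x := by
      intro x hx
      rw [hWdef, Multiset.mem_coe, List.mem_ofFn] at hx
      obtain ⟨i, rfl⟩ := hx
      exact hmono (show (⟨0, hkpos⟩ : Fin k) ≤ i from Fin.mk_le_mk.mpr (Nat.zero_le _))
    have hw0W : w0 ∈ W := by
      rw [hWdef, Multiset.mem_coe, List.mem_ofFn]
      exact ⟨⟨0, hkpos⟩, rfl⟩
    have hw0e : Even w0 := heven hkpos
    have hw0evensW : w0 ∈ evensW := Multiset.mem_filter.mpr ⟨hw0W, hw0e⟩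
    have hcarde : Multiset.card evensW = m + 1 := by
      have := congrArg Multiset.card hsplit
      rw [Multiset.card_add] at this
      omega
    set Rm : Multiset ℕ := (w0/2) ::ₘ oddsW.map (fun n => n/2) with hRmdef
    set Cm : Multiset ℕ := (evensW.erase w0).map (fun n => n/2) with hCmdef
    have hRm : Multiset.card Rm = b + 1 := by
      rw [hRmdef]; simp [hcardodd]
    have hCm : Multiset.card Cm = m := by
      rw [hCmdef]
      rw [Multiset.card_map, Multiset.card_erase_of_mem hw0evensW, hcarde]
      rfl
    have hRb : ∀ x ∈ Rm, x ≤ N := by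
      intro x hx
      rcases Multiset.mem_cons.mp hx with h | h
      · have := hWlt w0 hw0W; omega
      · obtain ⟨n, hn, rfl⟩ := Multiset.mem_map.mp h
        have := hWlt n (Multiset.mem_of_mem_filter hn)
        omega
    have hCb : ∀ x ∈ Cm, x ≤ N := by
      intro x hx
      obtain ⟨n, hn, rfl⟩ := Multiset.mem_map.mp hx
      have := hWlt n (Multiset.mem_of_mem_filter (Multiset.mem_of_mem_erase hn))
      omega
    set r : Fin (b+1) → Fin (N+1) := fun j =>
      ⟨sortFun (b+1) Rm hRm j, Nat.lt_succ_of_le (hRb _ (sortFun_mem (b+1) Rm hRm j))⟩ with hrdef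
    set c : Fin m → Fin (N+1) := fun j =>
      ⟨sortFun m Cm hCm j, Nat.lt_succ_of_le (hCb _ (sortFun_mem m Cm hCm j))⟩ with hcdef
    have hRmmin : ∀ x ∈ Rm, w0/2 ≤ x := by
      intro x hx
      rcases Multiset.mem_cons.mp hx with h | h
      · omega
      · obtain ⟨n, hn, rfl⟩ := Multiset.mem_map.mp h
        exact Nat.div_le_div_right (hmin n (Multiset.mem_of_mem_filter hn))
    have hr0 : sortFun (b+1) Rm hRm 0 = w0/2 := by
      have h0 : (0 : Fin (b+1)) = ⟨0, Nat.succ_pos b⟩ := rfl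
      rw [h0]
      exact le_antisymm (sortFun_zero_le (b+1) Rm hRm _ (Multiset.mem_cons_self _ _))
        (hRmmin _ (sortFun_mem (b+1) Rm hRm _))
    have hXtail : (↑(List.ofFn (fun j : Fin b => sortFun (b+1) Rm hRm j.succ)) : Multiset ℕ)
        = oddsW.map (fun n => n/2) := by
      have h5 := coe_ofFn_succ (sortFun (b+1) Rm hRm)
      rw [coe_ofFn_sortFun, hr0] at h5
      exact ((Multiset.cons_inj_right _).mp h5.symm)
    have hoddsfix : Multiset.map (fun n => 2*(n/2)+1) oddsW = oddsW := by
      refine (Multiset.map_congr rfl ?_).trans (Multiset.map_id' oddsW)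
      intro x hx
      have : Odd x := (Multiset.mem_filter.mp hx).2
      rw [Nat.odd_iff] at this
      omega
    have hevensfix : Multiset.map (fun n => 2*(n/2)) (evensW.erase w0) = evensW.erase w0 := by
      refine (Multiset.map_congr rfl ?_).trans (Multiset.map_id' _)
      intro x hx
      have : Even x := (Multiset.mem_filter.mp (Multiset.mem_of_mem_erase hx)).2
      rw [Nat.even_iff] at this
      omega
    have hL : hookMs b m (fun j => ((r j : ℕ))) (fun j => ((c j : ℕ))) = W := by
      show hookMs b m (sortFun (b+1) Rm hRm) (sortFun m Cm hCm) = W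
      rw [hookMs, hr0, coe_ofFn_sortFun m Cm hCm, hXtail, hCmdef,
        Multiset.map_map, Multiset.map_map]
      have e1 : Multiset.map ((fun v => 2*v+1) ∘ fun n => n/2) oddsW = oddsW := hoddsfix
      have e2 : Multiset.map ((fun v => 2*v) ∘ fun n => n/2) (evensW.erase w0)
          = evensW.erase w0 := hevensfix
      rw [e1, e2]
      have hw02 : 2 * (w0/2) = w0 := by rw [Nat.even_iff] at hw0e; omega
      rw [hw02]
      calc w0 ::ₘ (oddsW + evensW.erase w0) = oddsW + (w0 ::ₘ evensW.erase w0) :=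
            (Multiset.add_cons _ _ _).symm
        _ = oddsW + evensW := by rw [Multiset.cons_erase hw0evensW]
        _ = W := hsplit
    refine ⟨(r, c), ?_, ?_⟩
    · rw [Finset.mem_filter]
      refine ⟨Finset.mem_univ _, ?_, ?_, ?_, ?_⟩
      · intro x y hxy
        exact Fin.mk_le_mk.mpr (sortFun_monotone (b+1) Rm hRm hxy)
      · intro x y hxy
        exact Fin.mk_le_mk.mpr (sortFun_monotone m Cm hCm hxy)
      · intro ha hm
        show sortFun (b+1) Rm hRm ⟨0, ha⟩ ≤ sortFun m Cm hCm ⟨0, hm⟩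
        have h6 : sortFun m Cm hCm ⟨0, hm⟩ ∈ Cm := sortFun_mem m Cm hCm _
        obtain ⟨n, hn, hn2⟩ := Multiset.mem_map.mp h6
        have h7 := hmin n (Multiset.mem_of_mem_filter (Multiset.mem_of_mem_erase hn))
        have h8 : sortFun (b+1) Rm hRm ⟨0, ha⟩ = w0/2 := hr0
        rw [h8, ← hn2]
        exact Nat.div_le_div_right h7
      · calc hookWt (b+1) m (fun j => ((r j : ℕ))) (fun j => ((c j : ℕ)))
            = msWt (hookMs b m (fun j => ((r j : ℕ))) (fun j => ((c j : ℕ)))) :=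
              (hookMs_wt b m _ _).symm
          _ = msWt W := by rw [hL]
          _ = wordWt k (fun i => ((w i : ℕ))) := (wordWt_eq k _).symm
          _ = d := hwt
    · have hfin : sortFun k W hW = fun i => ((w i : ℕ)) :=
        mono_eq_of_coe_eq (sortFun_monotone k W hW) (fun i j hij => hmono hij)
          (by rw [coe_ofFn_sortFun])
      funext i
      apply Fin.val_injective
      have hcard2 : Multiset.card (hookMs b m (fun j => ((r j : ℕ))) (fun j => ((c j : ℕ)))) = k := by
        rw [hookMs_card]; exact hk
      have h9 := (sortFun_congr hcard2 hL).trans hfin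
      exact congrFun h9 i

end HookAux

/-- (Hook sum formula.)  For every `k ≥ 1`,
`gp_k(y) = ∑_{a=1}^{k} g_{(a,1^{k-a})}(y)`. -/
theorem hook_sum_formula (k : ℕ) (hk : 1 ≤ k) :
    gpPoly k = ∑ a ∈ Finset.Icc 1 k, ghook a (k - a) := by
  funext d
  set N := d.support.sup id with hN
  have hrhs : (∑ a ∈ Finset.Icc 1 k, ghook a (k - a)) d
      = ∑ a ∈ Finset.Icc 1 k, ghook a (k - a) d := by
    have h := map_sum (MvPowerSeries.coeff d) (fun a => ghook a (k - a)) (Finset.Icc 1 k)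
    simpa only [MvPowerSeries.coeff_apply] using h
  rw [hrhs]
  show ((((Finset.univ : Finset (Fin k → Fin (2 * N + 2)))).filter
      (fun w : Fin k → Fin (2 * N + 2) => Monotone w ∧ (∀ h : 0 < k, Even ((w ⟨0, h⟩ : ℕ))) ∧
        wordWt k (fun i => (w i : ℕ)) = d)).card : ℤ) = _
  have hpos : 0 < k := hk
  have hmaps : ∀ w ∈ (((Finset.univ : Finset (Fin k → Fin (2 * N + 2)))).filter
      (fun w : Fin k → Fin (2 * N + 2) => Monotone w ∧ (∀ h : 0 < k, Even ((w ⟨0, h⟩ : ℕ))) ∧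
        wordWt k (fun i => (w i : ℕ)) = d)),
      (Finset.univ.filter (fun i => Odd ((w i : ℕ)))).card + 1 ∈ Finset.Icc 1 k := by
    intro w hw
    rw [Finset.mem_filter] at hw
    rw [Finset.mem_Icc]
    refine ⟨by omega, ?_⟩
    have hsub : Finset.univ.filter (fun i => Odd ((w i : ℕ))) ⊆
        Finset.univ.erase ⟨0, hpos⟩ := by
      intro i hi
      rw [Finset.mem_filter] at hi
      rw [Finset.mem_erase]
      refine ⟨?_, Finset.mem_univ _⟩
      rintro rfl
      have h2 := hw.2.2.1 hpos
      rw [Nat.even_iff] at h2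
      have h3 := hi.2
      rw [Nat.odd_iff] at h3
      omega
    have h4 := Finset.card_le_card hsub
    rw [Finset.card_erase_of_mem (Finset.mem_univ _)] at h4
    simp only [Finset.card_univ, Fintype.card_fin] at h4
    omega
  rw [Finset.card_eq_sum_card_fiberwise hmaps]
  push_cast
  apply Finset.sum_congr rfl
  intro a ha
  rw [Finset.mem_Icc] at ha
  obtain ⟨b, rfl⟩ : ∃ b, a = b + 1 := ⟨a - 1, by omega⟩
  show _ = ((((Finset.univ : Finset ((Fin (b+1) → Fin (N+1)) × (Fin (k-(b+1)) → Fin (N+1))))).filter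
    _).card : ℤ)
  rw [Finset.filter_filter]
  congr 1
  exact_mod_cast (HookAux.card_eq N k b (k - (b+1)) (by omega) d).symm

end
end
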